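/- arXiv:1908.00881 — 8 statements merged into one kernel-verified Lean document; each statement's English description precedes it below -/
import Mathlib

section
/- Let D be an n × n real symmetric matrix with zero diagonal, let e be the all-ones vector in ℝⁿ, and let s ∈ ℝⁿ satisfy eᵀs = 1. Then D is a Euclidean distance matrix (i.e., there exist points p¹,...,pⁿ in some Euclidean space with D_{ij} = ‖pⁱ - pʲ‖²) if and only if the matrix B = -(1/2)(I - e sᵀ) D (I - s eᵀ) is positive semidefinite. -/
open Matrix

private lemma vecMulVec_mul' {n m : ℕ} (w v : Fin n → ℝ) (M : Matrix (Fin n) (Fin m) ℝ) :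
    vecMulVec w v * M = vecMulVec w (v ᵥ* M) := by
  ext i j
  simp [mul_apply, vecMulVec_apply, vecMul, dotProduct, Finset.mul_sum, mul_assoc]

private lemma mul_vecMulVec' {n m : ℕ} (M : Matrix (Fin m) (Fin n) ℝ) (w v : Fin n → ℝ) :
    M * vecMulVec w v = vecMulVec (M *ᵥ w) v := by
  ext i j
  simp [mul_apply, vecMulVec_apply, mulVec, dotProduct, Finset.sum_mul, mul_assoc]

private lemma vecMul_vecMulVec' {n : ℕ} (v w u : Fin n → ℝ) :
    v ᵥ* vecMulVec w u = (v ⬝ᵥ w) • u := by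
  ext j
  simp [vecMul, vecMulVec_apply, dotProduct, Finset.sum_mul, mul_assoc]

private lemma dist_sq_eq {m : ℕ} (x y : EuclideanSpace ℝ (Fin m)) :
    dist x y ^ 2 = ∑ k, (x k - y k) ^ 2 := by
  rw [EuclideanSpace.dist_eq, Real.sq_sqrt (by positivity)]
  congr 1; funext k
  rw [Real.dist_eq, sq_abs]

private lemma sum_sub_sq {m : ℕ} (a b : Fin m → ℝ) :
    ∑ k, (a k - b k) ^ 2 = ∑ k, a k ^ 2 + ∑ k, b k ^ 2 - 2 * ∑ k, a k * b k := by
  rw [Finset.mul_sum, ← Finset.sum_add_distrib, ← Finset.sum_sub_distrib]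
  congr 1; funext k; ring

theorem stmt1 {n : ℕ} (D : Matrix (Fin n) (Fin n) ℝ)
    (hsym : D.IsSymm) (hdiag : ∀ i, D i i = 0)
    (e : Fin n → ℝ) (he : e = fun _ => 1)
    (s : Fin n → ℝ) (hs : ∑ i, s i = 1)
    (B : Matrix (Fin n) (Fin n) ℝ)
    (hB : B = (-(1/2) : ℝ) • ((1 - vecMulVec e s) * D * (1 - vecMulVec s e))) :
    (∃ (m : ℕ) (p : Fin n → EuclideanSpace ℝ (Fin m)),
        ∀ i j, D i j = dist (p i) (p j) ^ 2) ↔ B.PosSemidef := by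
  have hJe : (1 - vecMulVec e s) *ᵥ e = 0 := by
    ext i
    simp [sub_mulVec, mulVec, vecMulVec_apply, dotProduct, he, ← Finset.mul_sum, hs,
      Matrix.one_apply, Finset.sum_ite_eq]
  have heK : e ᵥ* (1 - vecMulVec s e) = 0 := by
    ext j
    simp [vecMul_sub, vecMul, vecMulVec_apply, dotProduct, he, ← Finset.sum_mul, hs,
      Matrix.one_apply, Finset.sum_ite_eq']
  constructor
  · rintro ⟨m, p, hD⟩
    set A : Matrix (Fin m) (Fin n) ℝ := Matrix.of (fun k i => p i k) with hA
    set c : Fin n → ℝ := fun i => ∑ k, (p i k) ^ 2 with hc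
    have hDeq : D = vecMulVec c e + vecMulVec e c - (2 : ℝ) • (Aᴴ * A) := by
      ext i j
      rw [hD i j, dist_sq_eq, sum_sub_sq]
      simp [vecMulVec_apply, mul_apply, hA, he, hc, conjTranspose_apply]
    have hX : (1 - vecMulVec e s) * vecMulVec c e * (1 - vecMulVec s e) = 0 := by
      rw [mul_assoc, vecMulVec_mul', heK]
      ext i j; simp [mul_apply, vecMulVec_apply]
    have hY : (1 - vecMulVec e s) * vecMulVec e c * (1 - vecMulVec s e) = 0 := by
      rw [mul_vecMulVec', hJe]
      ext i j; simp [mul_apply, vecMulVec_apply]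
    have hBeq : B = (1 - vecMulVec e s) * (Aᴴ * A) * (1 - vecMulVec s e) := by
      set J := 1 - vecMulVec e s with hJdef
      set K := 1 - vecMulVec s e with hKdef
      clear_value J K
      rw [hB, hDeq, Matrix.mul_sub, Matrix.mul_add, Matrix.sub_mul, Matrix.add_mul,
        Matrix.mul_smul, Matrix.smul_mul, hX, hY, zero_add, zero_sub, smul_neg, smul_smul]
      norm_num
    have hK : (1 - vecMulVec s e) = (1 - vecMulVec e s)ᴴ := by
      ext i j
      by_cases h : i = j
      · subst h; simp [vecMulVec_apply, conjTranspose_apply, mul_comm]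
      · simp [vecMulVec_apply, conjTranspose_apply, Matrix.one_apply, h, Ne.symm h, mul_comm]
    rw [hBeq, hK]
    exact (posSemidef_conjTranspose_mul_self A).mul_mul_conjTranspose_same _
  · intro hBpsd
    obtain ⟨C, hC⟩ := by open scoped MatrixOrder in exact CStarAlgebra.nonneg_iff_eq_star_mul_self.mp hBpsd.nonneg
    -- key identity: D i j = B i i + B j j - 2 * B i j
    have hMeq : (1 - vecMulVec e s) * D * (1 - vecMulVec s e)
        = D - vecMulVec e (s ᵥ* D) - vecMulVec (D *ᵥ s) e
          + ((s ᵥ* D) ⬝ᵥ s) • vecMulVec e e := by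
      simp only [Matrix.mul_sub, Matrix.sub_mul, Matrix.mul_one, Matrix.one_mul]
      rw [vecMulVec_mul', mul_vecMulVec', vecMulVec_mul', vecMul_vecMulVec']
      have : vecMulVec e (((s ᵥ* D) ⬝ᵥ s) • e) = ((s ᵥ* D) ⬝ᵥ s) • vecMulVec e e := by
        ext i j; simp [vecMulVec_apply]; ring
      rw [this]
      abel
    have hu : ∀ j, (s ᵥ* D) j = (D *ᵥ s) j := by
      intro j
      simp [vecMul, mulVec, dotProduct]
      exact Finset.sum_congr rfl fun b _ => by rw [hsym.apply j b]; ring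
    have key : ∀ i j, D i j = B i i + B j j - 2 * B i j := by
      intro i j
      rw [hB, hMeq]
      simp only [Matrix.smul_apply, Matrix.add_apply, Matrix.sub_apply, vecMulVec_apply, smul_eq_mul, he,
        hu, hdiag]
      ring
    refine ⟨n, fun i => (WithLp.equiv 2 _).symm (fun k => C k i), fun i j => ?_⟩
    rw [dist_sq_eq]
    simp only [WithLp.equiv_symm_apply, PiLp.toLp_apply]
    rw [sum_sub_sq, key i j]
    have hBent : ∀ a b, B a b = ∑ k, C k a * C k b := by
      intro a b
      rw [hC]
      simp [mul_apply, conjTranspose_apply]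
    rw [hBent i i, hBent j j, hBent i j]
    simp [pow_two]
end

section
/- If D is a nonzero n × n Euclidean distance matrix, then the all-ones vector e lies in the column space of D; i.e., there exists w ∈ ℝⁿ with Dw = e. -/
open Matrix Finset RealInnerProductSpace

theorem stmt4 {n : ℕ} (D : Matrix (Fin n) (Fin n) ℝ)
    (hEDM : ∃ (m : ℕ) (p : Fin n → EuclideanSpace ℝ (Fin m)),
      ∀ i j, D i j = dist (p i) (p j) ^ 2)
    (hD0 : D ≠ 0) :
    ∃ w : Fin n → ℝ, D *ᵥ w = fun _ => 1 := by
  obtain ⟨m, p, hp⟩ := hEDM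
  have hsymm : D.IsHermitian := by
    ext i j
    simp [Matrix.conjTranspose_apply, hp, dist_comm]
  -- key: any kernel vector has zero sum (else D = 0)
  have key : ∀ z : Fin n → ℝ, D *ᵥ z = 0 → (∑ i, z i) = 0 := by
    intro z hz
    by_contra hs
    apply hD0
    set s : ℝ := ∑ i, z i with hsdef
    set y : Fin n → ℝ := fun i => z i / s with hydef
    have hy1 : ∑ i, y i = 1 := by
      simp only [hydef, ← Finset.sum_div, ← hsdef]
      field_simp
    have hzy : D *ᵥ y = 0 := by
      have : y = s⁻¹ • z := by
        funext i; simp [hydef, div_eq_inv_mul, smul_eq_mul]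
      rw [this, Matrix.mulVec_smul, hz, smul_zero]
    set v : EuclideanSpace ℝ (Fin m) := ∑ j, y j • p j with hvdef
    set t : ℝ := ∑ j, y j * ‖p j‖ ^ 2 with htdef
    have hinner : ∀ i, ⟪p i, v⟫ = ∑ j, y j * ⟪p i, p j⟫ := by
      intro i
      rw [hvdef, inner_sum]
      exact Finset.sum_congr rfl fun j _ => real_inner_smul_right _ _ _
    have heq : ∀ i, ‖p i‖ ^ 2 + t - 2 * ⟪p i, v⟫ = 0 := by
      intro i
      have h0 : (D *ᵥ y) i = 0 := by rw [hzy]; rfl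
      rw [Matrix.mulVec, dotProduct] at h0
      have hD : ∀ j, D i j = ‖p i‖ ^ 2 - 2 * ⟪p i, p j⟫ + ‖p j‖ ^ 2 := by
        intro j
        rw [hp, dist_eq_norm, @norm_sub_sq_real]
      calc ‖p i‖ ^ 2 + t - 2 * ⟪p i, v⟫
          = ∑ j, D i j * y j := by
            simp only [hD, hinner, htdef]
            rw [Finset.sum_congr rfl (fun j _ => by ring :
              ∀ j ∈ Finset.univ, (‖p i‖ ^ 2 - 2 * ⟪p i, p j⟫ + ‖p j‖ ^ 2) * y j
                = ‖p i‖ ^ 2 * y j + (y j * ‖p j‖ ^ 2 - 2 * (y j * ⟪p i, p j⟫)))]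
            rw [Finset.sum_add_distrib, Finset.sum_sub_distrib, ← Finset.mul_sum,
              ← Finset.mul_sum, hy1]
            ring
        _ = 0 := h0
    have ht : t = ‖v‖ ^ 2 := by
      have h2 : ∑ i, y i * (‖p i‖ ^ 2 + t - 2 * ⟪p i, v⟫) = 0 := by
        simp only [heq, mul_zero, Finset.sum_const_zero]
      have hvw : ∀ w : EuclideanSpace ℝ (Fin m), ⟪v, w⟫ = ∑ i, y i * ⟪p i, w⟫ := by
        intro w
        rw [hvdef, sum_inner]
        exact Finset.sum_congr rfl fun j _ => real_inner_smul_left _ _ _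
      have hvv : ∑ i, y i * ⟪p i, v⟫ = ‖v‖ ^ 2 := by
        rw [← real_inner_self_eq_norm_sq, hvw]
      rw [Finset.sum_congr rfl (fun i _ => by ring :
        ∀ i ∈ Finset.univ, y i * (‖p i‖ ^ 2 + t - 2 * ⟪p i, v⟫)
          = y i * ‖p i‖ ^ 2 + t * y i - 2 * (y i * ⟪p i, v⟫))] at h2
      rw [Finset.sum_sub_distrib, Finset.sum_add_distrib, ← htdef, ← Finset.mul_sum,
        ← Finset.mul_sum, hy1, hvv] at h2
      linarith
    have hpv : ∀ i, p i = v := by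
      intro i
      have : ‖p i - v‖ ^ 2 = 0 := by
        rw [@norm_sub_sq_real, ← ht]
        have := heq i
        linarith
      have := pow_eq_zero_iff (n := 2) (by norm_num) |>.mp this
      rw [norm_eq_zero] at this
      exact sub_eq_zero.mp this
    ext i j
    rw [hp, hpv i, hpv j]
    simp
  -- orthogonal decomposition
  set T : EuclideanSpace ℝ (Fin n) →ₗ[ℝ] EuclideanSpace ℝ (Fin n) :=
    Matrix.toEuclideanLin D with hT
  set K : Submodule ℝ (EuclideanSpace ℝ (Fin n)) := LinearMap.range T with hK
  have hsym' : T.IsSymmetric := Matrix.isHermitian_iff_isSymmetric.mp hsymm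
  set e' : EuclideanSpace ℝ (Fin n) := (WithLp.equiv 2 (Fin n → ℝ)).symm (fun _ => 1)
    with he'
  obtain ⟨a, ha, b, hb, hab⟩ := K.exists_add_mem_mem_orthogonal e'
  have hTb : T b = 0 := by
    have h1 : ⟪T b, T b⟫ = 0 := by
      rw [hsym' b (T b), real_inner_comm]
      exact (Submodule.mem_orthogonal K b).mp hb (T (T b)) ⟨T b, rfl⟩
    exact inner_self_eq_zero.mp h1
  have hb0 : b = 0 := by
    by_contra hbne
    have hsum : ∑ i, b i = 0 := by
      apply key
      have : D *ᵥ (WithLp.equiv 2 (Fin n → ℝ)) b = WithLp.equiv 2 (Fin n → ℝ) (T b) :=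
        (Matrix.ofLp_toEuclideanLin_apply D b).symm
      rw [hTb] at this
      exact this
    have hib : ⟪e', b⟫ = ∑ i, b i := by
      rw [PiLp.inner_apply]
      simp [he']
    have hib2 : ⟪e', b⟫ = ‖b‖ ^ 2 := by
      rw [hab, inner_add_left, (Submodule.mem_orthogonal K b).mp hb a ha,
        real_inner_self_eq_norm_sq, zero_add]
    rw [hib, hsum] at hib2
    exact hbne (by simpa using (norm_eq_zero.mp (by nlinarith [sq_nonneg ‖b‖] : ‖b‖ = 0)))
  rw [hb0, add_zero] at hab
  obtain ⟨w, hw⟩ := ha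
  refine ⟨(WithLp.equiv 2 (Fin n → ℝ)) w, ?_⟩
  have : D *ᵥ (WithLp.equiv 2 (Fin n → ℝ)) w = WithLp.equiv 2 (Fin n → ℝ) (T w) :=
    (Matrix.ofLp_toEuclideanLin_apply D w).symm
  rw [this, hw, ← hab]
  rfl
end

section
/- Let D be a nonzero EDM and suppose Dw = e. Then D is spherical (its generating points lie on a sphere) if and only if eᵀw > 0, in which case the radius of the sphere is ρ = (1/(2 eᵀw))^{1/2}. -/
open Matrix InnerProductSpace

lemma edm_aux {n m : ℕ} (p : Fin n → EuclideanSpace ℝ (Fin m)) (w : Fin n → ℝ)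
    (h : ∀ i, ∑ j, dist (p i) (p j) ^ 2 * w j = 1) :
    (∀ i, (∑ k, w k) * ‖p i‖ ^ 2 + (∑ j, w j * ‖p j‖ ^ 2)
        - 2 * ⟪p i, ∑ j, w j • p j⟫_ℝ = 1) ∧
    2 * ((∑ k, w k) * ∑ j, w j * ‖p j‖ ^ 2) - 2 * ‖∑ j, w j • p j‖ ^ 2 = ∑ k, w k := by
  set s := ∑ k, w k with hs
  set A := ∑ j, w j * ‖p j‖ ^ 2 with hA
  set q := ∑ j, w j • p j with hqdef
  have hq : ∀ x : EuclideanSpace ℝ (Fin m), ⟪x, q⟫_ℝ = ∑ j, w j * ⟪x, p j⟫_ℝ := by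
    intro x
    rw [hqdef, inner_sum]
    exact Finset.sum_congr rfl fun j _ => real_inner_smul_right _ _ _
  have e1 : ∀ i, s * ‖p i‖ ^ 2 + A - 2 * ⟪p i, q⟫_ℝ = 1 := by
    intro i
    have h1 := h i
    have h2 : ∀ j : Fin n, dist (p i) (p j) ^ 2 * w j
        = ‖p i‖ ^ 2 * w j + w j * ‖p j‖ ^ 2 - 2 * (w j * ⟪p i, p j⟫_ℝ) := by
      intro j
      rw [dist_eq_norm, @norm_sub_sq_real]
      ring
    rw [Finset.sum_congr rfl fun j _ => h2 j, Finset.sum_sub_distrib,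
      Finset.sum_add_distrib, ← Finset.mul_sum, ← Finset.mul_sum] at h1
    rw [hq]
    rw [← hs, ← hA] at h1
    linarith
  refine ⟨e1, ?_⟩
  have hqq : ‖q‖ ^ 2 = ∑ j, w j * ⟪p j, q⟫_ℝ := by
    rw [← real_inner_self_eq_norm_sq, hq q]
    exact Finset.sum_congr rfl fun j _ => by rw [real_inner_comm]
  have h4 : ∑ i, w i * (s * ‖p i‖ ^ 2 + A - 2 * ⟪p i, q⟫_ℝ) = ∑ i, w i * 1 :=
    Finset.sum_congr rfl fun i _ => by rw [e1 i]
  have h5 : ∀ i : Fin n, w i * (s * ‖p i‖ ^ 2 + A - 2 * ⟪p i, q⟫_ℝ)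
      = s * (w i * ‖p i‖ ^ 2) + A * w i - 2 * (w i * ⟪p i, q⟫_ℝ) := fun i => by ring
  rw [Finset.sum_congr rfl fun i _ => h5 i, Finset.sum_sub_distrib,
    Finset.sum_add_distrib, ← Finset.mul_sum, ← Finset.mul_sum, ← Finset.mul_sum] at h4
  simp only [mul_one] at h4
  rw [← hs, ← hA] at h4
  linarith [hqq]

theorem stmt5 {n m : ℕ} (D : Matrix (Fin n) (Fin n) ℝ)
    (p : Fin n → EuclideanSpace ℝ (Fin m))
    (hD : ∀ i j, D i j = dist (p i) (p j) ^ 2)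
    (hD0 : D ≠ 0)
    (w : Fin n → ℝ) (hw : D *ᵥ w = fun _ => 1) :
    ((∃ (c : EuclideanSpace ℝ (Fin m)) (ρ : ℝ), ∀ i, dist (p i) c = ρ) ↔
      0 < ∑ i, w i) ∧
    (0 < ∑ i, w i →
      ∃ c : EuclideanSpace ℝ (Fin m),
        ∀ i, dist (p i) c = Real.sqrt (1 / (2 * ∑ i, w i))) := by
  have hsum : ∀ i, ∑ j, dist (p i) (p j) ^ 2 * w j = 1 := by
    intro i
    have h := congrFun hw i
    simpa [Matrix.mulVec, dotProduct, hD] using h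
  have hn : 0 < n := by
    rcases Nat.eq_zero_or_pos n with h0 | h
    · exfalso; apply hD0; subst h0; ext i j; exact i.elim0
    · exact h
  have main : 0 < ∑ i, w i → ∃ c : EuclideanSpace ℝ (Fin m),
      ∀ i, dist (p i) c = Real.sqrt (1 / (2 * ∑ i, w i)) := by
    intro hspos
    obtain ⟨e1, e2⟩ := edm_aux p w hsum
    set s := ∑ k, w k with hs
    set A := ∑ j, w j * ‖p j‖ ^ 2 with hA
    set q := ∑ j, w j • p j with hqdef
    have hs0 : s ≠ 0 := ne_of_gt hspos
    refine ⟨s⁻¹ • q, fun i => ?_⟩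
    have hI : ⟪p i, q⟫_ℝ = (s * ‖p i‖ ^ 2 + A - 1) / 2 := by linarith [e1 i]
    have hQ : ‖q‖ ^ 2 = s * A - s / 2 := by linarith [e2]
    have hd2 : dist (p i) (s⁻¹ • q) ^ 2
        = ‖p i‖ ^ 2 - 2 * (s⁻¹ * ⟪p i, q⟫_ℝ) + s⁻¹ ^ 2 * ‖q‖ ^ 2 := by
      rw [dist_eq_norm, @norm_sub_sq_real, real_inner_smul_right, norm_smul]
      rw [Real.norm_eq_abs, abs_of_pos (inv_pos.mpr hspos)]
      ring
    have hval : dist (p i) (s⁻¹ • q) ^ 2 = 1 / (2 * s) := by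
      rw [hd2, hI, hQ]
      field_simp
      ring
    rw [← hval, Real.sqrt_sq dist_nonneg]
  refine ⟨⟨?_, fun hs => ⟨(main hs).choose, _, (main hs).choose_spec⟩⟩, main⟩
  rintro ⟨c, ρ, hc⟩
  by_contra hsle
  push_neg at hsle
  set u : Fin n → EuclideanSpace ℝ (Fin m) := fun i => p i - c with hu
  have hsum' : ∀ i, ∑ j, dist (u i) (u j) ^ 2 * w j = 1 := by
    intro i
    simpa [hu, dist_sub_right] using hsum i
  obtain ⟨e1, e2⟩ := edm_aux u w hsum'
  set s := ∑ k, w k with hs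
  set v := ∑ j, w j • u j with hv
  have hnu : ∀ i, ‖u i‖ = ρ := by
    intro i
    rw [hu]
    simp only []
    rw [← dist_eq_norm]
    exact hc i
  have hA : (∑ j, w j * ‖u j‖ ^ 2) = s * ρ ^ 2 := by
    simp_rw [hnu]
    rw [← Finset.sum_mul]
  let i0 : Fin n := ⟨0, hn⟩
  have hit : ∀ i, ⟪u i, v⟫_ℝ = s * ρ ^ 2 - 1 / 2 := by
    intro i
    have h1 := e1 i
    rw [hA, hnu i] at h1
    linarith
  have hv2 : ‖v‖ ^ 2 = s * ⟪u i0, v⟫_ℝ := by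
    rw [hit i0]
    have h2 := e2
    rw [hA] at h2
    nlinarith
  have hcs : ⟪u i0, v⟫_ℝ * ⟪u i0, v⟫_ℝ ≤ ⟪u i0, u i0⟫_ℝ * ⟪v, v⟫_ℝ :=
    real_inner_mul_inner_self_le _ _
  rw [real_inner_self_eq_norm_sq, real_inner_self_eq_norm_sq, hnu i0, hv2] at hcs
  have ht := hit i0
  have hsr : s * ρ ^ 2 ≤ 0 :=
    mul_nonpos_of_nonpos_of_nonneg hsle (sq_nonneg ρ)
  nlinarith [hcs, ht, hsr]
end

section
/- For a simple graph G on n nodes with k nontrivial connected components, the minimum dimension d(G) of an orthonormal representation of G (unit vectors p¹,...,pⁿ with ⟨pⁱ,pʲ⟩ < 0 if i,j adjacent and ⟨pⁱ,pʲ⟩ = 0 if i ≠ j non-adjacent) equals n - k. -/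
open scoped RealInnerProductSpace
open Matrix Finset

namespace Stmt14

section general
variable {n : ℕ} {E : Type*} [NormedAddCommGroup E] [InnerProductSpace ℝ E]

/-- The linear map sending coefficients to the corresponding linear combination of `p`. -/
noncomputable def linComb (p : Fin n → E) : (Fin n → ℝ) →ₗ[ℝ] E where
  toFun c := ∑ i, c i • p i
  map_add' a b := by simp [add_smul, Finset.sum_add_distrib]
  map_smul' t a := by simp [smul_smul, Finset.smul_sum]

lemma linComb_apply (p : Fin n → E) (c : Fin n → ℝ) : linComb p c = ∑ i, c i • p i := rfl

lemma inner_linComb (p : Fin n → E) (c : Fin n → ℝ) (x : E) :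
    ⟪x, linComb p c⟫ = ∑ j, c j * ⟪x, p j⟫ := by
  simp [linComb_apply, inner_sum, real_inner_smul_right]

lemma linComb_inner_linComb (p : Fin n → E) (a b : Fin n → ℝ) :
    ⟪linComb p a, linComb p b⟫ = ∑ i, ∑ j, a i * (b j * ⟪p i, p j⟫) := by
  rw [linComb_apply, sum_inner]
  exact Finset.sum_congr rfl fun i _ => by
    rw [real_inner_smul_left, inner_linComb, Finset.mul_sum]

end general

section lower

variable {n r : ℕ} {G : SimpleGraph (Fin n)} {p : Fin n → EuclideanSpace ℝ (Fin r)}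

lemma abs_ker (h2 : ∀ i j, G.Adj i j → ⟪p i, p j⟫ < 0)
    (h3 : ∀ i j, i ≠ j → ¬ G.Adj i j → ⟪p i, p j⟫ = 0)
    {c : Fin n → ℝ} (hc : linComb p c = 0) :
    linComb p (fun i => |c i|) = 0 := by
  have hle : ⟪linComb p (fun i => |c i|), linComb p (fun i => |c i|)⟫ ≤
      ⟪linComb p c, linComb p c⟫ := by
    rw [linComb_inner_linComb, linComb_inner_linComb]
    refine Finset.sum_le_sum fun i _ => Finset.sum_le_sum fun j _ => ?_
    rcases eq_or_ne i j with rfl | hij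
    · rw [← mul_assoc, ← mul_assoc, abs_mul_abs_self]
    · by_cases hadj : G.Adj i j
      · have hm := h2 i j hadj
        have : c i * c j ≤ |c i| * |c j| := le_trans (le_abs_self _) (abs_mul _ _).le
        nlinarith
      · rw [h3 i j hij hadj]; simp
  rw [hc, inner_zero_left] at hle
  exact inner_self_eq_zero.mp (le_antisymm hle real_inner_self_nonneg)

lemma coord (h1 : ∀ i, ‖p i‖ = 1) {c : Fin n → ℝ} (hc : linComb p c = 0) (i : Fin n) :
    c i + ∑ j ∈ Finset.univ.erase i, c j * ⟪p i, p j⟫ = 0 := by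
  have h0 : ⟪p i, linComb p c⟫ = 0 := by rw [hc, inner_zero_right]
  rw [inner_linComb] at h0
  rw [← Finset.add_sum_erase _ _ (Finset.mem_univ i)] at h0
  have : ⟪p i, p i⟫ = 1 := by rw [real_inner_self_eq_norm_sq, h1 i]; norm_num
  rw [this, mul_one] at h0
  exact h0

lemma isolated_zero (h1 : ∀ i, ‖p i‖ = 1)
    (h3 : ∀ i j, i ≠ j → ¬ G.Adj i j → ⟪p i, p j⟫ = 0)
    {c : Fin n → ℝ} (hc : linComb p c = 0) {i : Fin n} (hiso : ∀ j, ¬ G.Adj i j) :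
    c i = 0 := by
  have h := coord h1 hc i
  have hz : ∑ j ∈ Finset.univ.erase i, c j * ⟪p i, p j⟫ = 0 := by
    refine Finset.sum_eq_zero fun j hj => ?_
    rw [h3 i j (Ne.symm (Finset.ne_of_mem_erase hj)) (hiso j), mul_zero]
  rw [hz, add_zero] at h
  exact h

lemma adj_zero (h1 : ∀ i, ‖p i‖ = 1)
    (h2 : ∀ i j, G.Adj i j → ⟪p i, p j⟫ < 0)
    (h3 : ∀ i j, i ≠ j → ¬ G.Adj i j → ⟪p i, p j⟫ = 0)
    {c : Fin n → ℝ} (hc : linComb p c = 0) (hnn : ∀ i, 0 ≤ c i)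
    {i j : Fin n} (hci : c i = 0) (hadj : G.Adj i j) : c j = 0 := by
  have h := coord h1 hc i
  rw [hci, zero_add] at h
  have hterms : ∀ m ∈ Finset.univ.erase i, c m * ⟪p i, p m⟫ ≤ 0 := by
    intro m hm
    have hmi : m ≠ i := Finset.ne_of_mem_erase hm
    by_cases hadj' : G.Adj i m
    · exact mul_nonpos_of_nonneg_of_nonpos (hnn m) (h2 i m hadj').le
    · rw [h3 i m (Ne.symm hmi) hadj', mul_zero]
  have hall := (Finset.sum_eq_zero_iff_of_nonpos hterms).mp h
  have hj := hall j (Finset.mem_erase.mpr ⟨(G.ne_of_adj hadj).symm, Finset.mem_univ j⟩)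
  have := (h2 i j hadj).ne
  rcases mul_eq_zero.mp hj with h' | h'
  · exact h'
  · exact absurd h' this

lemma reach_zero (h1 : ∀ i, ‖p i‖ = 1)
    (h2 : ∀ i j, G.Adj i j → ⟪p i, p j⟫ < 0)
    (h3 : ∀ i j, i ≠ j → ¬ G.Adj i j → ⟪p i, p j⟫ = 0)
    {c : Fin n → ℝ} (hc : linComb p c = 0) (hnn : ∀ i, 0 ≤ c i)
    {u v : Fin n} (hu : c u = 0) (huv : G.Reachable u v) : c v = 0 := by
  obtain ⟨w⟩ := huv
  induction w with
  | nil => exact hu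
  | cons hadj _ ih => exact ih (adj_zero h1 h2 h3 hc hnn hu hadj)

end lower



variable {n : ℕ} (G : SimpleGraph (Fin n))

/-- The nontrivial connected components. -/
abbrev NT := {c : G.ConnectedComponent //
      ∃ u v : Fin n, u ≠ v ∧ G.connectedComponentMk u = c ∧
        G.connectedComponentMk v = c}

noncomputable def rep (c : G.ConnectedComponent) : Fin n := (Quot.exists_rep c).choose

lemma rep_spec (c : G.ConnectedComponent) : G.connectedComponentMk (rep G c) = c :=
  (Quot.exists_rep c).choose_spec

variable {G}

lemma reachable_ne_adj {i u : Fin n} (h : G.Reachable i u) (hne : i ≠ u) :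
    ∃ j, G.Adj i j := by
  obtain ⟨w⟩ := h
  cases w with
  | nil => exact absurd rfl hne
  | cons hadj _ => exact ⟨_, hadj⟩

lemma nontrivial_imp_adj {i : Fin n}
    (h : ∃ u v : Fin n, u ≠ v ∧ G.connectedComponentMk u = G.connectedComponentMk i ∧
        G.connectedComponentMk v = G.connectedComponentMk i) :
    ∃ j, G.Adj i j := by
  obtain ⟨u, v, huv, hu, hv⟩ := h
  rcases eq_or_ne i u with rfl | hne
  · exact reachable_ne_adj (SimpleGraph.ConnectedComponent.eq.mp hv.symm) huv
  · exact reachable_ne_adj (SimpleGraph.ConnectedComponent.eq.mp hu.symm) hne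

lemma adj_imp_nontrivial {i j : Fin n} (hadj : G.Adj i j) :
    ∃ u v : Fin n, u ≠ v ∧ G.connectedComponentMk u = G.connectedComponentMk i ∧
        G.connectedComponentMk v = G.connectedComponentMk i :=
  ⟨i, j, (G.ne_of_adj hadj), rfl, SimpleGraph.ConnectedComponent.sound hadj.symm.reachable⟩




variable {n r : ℕ} {G : SimpleGraph (Fin n)} {p : Fin n → EuclideanSpace ℝ (Fin r)}

theorem lower_bound (h1 : ∀ i, ‖p i‖ = 1)
    (h2 : ∀ i j, G.Adj i j → ⟪p i, p j⟫ < 0)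
    (h3 : ∀ i j, i ≠ j → ¬ G.Adj i j → ⟪p i, p j⟫ = 0) :
    n ≤ r + Nat.card (NT G) := by
  haveI : Fintype (NT G) := Fintype.ofFinite _
  set T := linComb p with hT
  have claim : ∀ c, linComb p c = 0 → (∀ C : NT G, c (rep G C.1) = 0) → c = 0 := by
    intro c hc hz
    have hc' : linComb p (fun i => |c i|) = 0 := abs_ker h2 h3 hc
    funext i
    by_cases hiso : ∀ j, ¬ G.Adj i j
    · exact isolated_zero h1 h3 hc hiso
    · push_neg at hiso
      obtain ⟨j, hadj⟩ := hiso
      have hnt := adj_imp_nontrivial hadj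
      have hz' : |c (rep G (G.connectedComponentMk i))| = 0 := by
        rw [hz ⟨G.connectedComponentMk i, hnt⟩, abs_zero]
      have hreach : G.Reachable (rep G (G.connectedComponentMk i)) i :=
        SimpleGraph.ConnectedComponent.eq.mp (rep_spec G _)
      have := reach_zero h1 h2 h3 hc' (fun i => abs_nonneg _) hz' hreach
      exact abs_eq_zero.mp this
  let φ : LinearMap.ker T →ₗ[ℝ] (NT G → ℝ) := {
    toFun := fun c => fun C => (c : Fin n → ℝ) (rep G C.1)
    map_add' := fun a b => rfl
    map_smul' := fun t a => rfl }
  have hφ : Function.Injective φ := by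
    rw [← LinearMap.ker_eq_bot, LinearMap.ker_eq_bot']
    intro c hc0
    have : (c : Fin n → ℝ) = 0 := claim c c.2 (fun C => congrFun hc0 C)
    exact Subtype.ext this
  have hrank := LinearMap.finrank_range_add_finrank_ker T
  have hrange : Module.finrank ℝ (LinearMap.range T) ≤ r :=
    (Submodule.finrank_le _).trans_eq finrank_euclideanSpace_fin
  have hker : Module.finrank ℝ (LinearMap.ker T) ≤ Nat.card (NT G) := by
    refine (LinearMap.finrank_le_finrank_of_injective hφ).trans_eq ?_
    rw [Module.finrank_fintype_fun_eq_card, Nat.card_eq_fintype_card]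
  have hn : Module.finrank ℝ (Fin n → ℝ) = n := by
    rw [Module.finrank_fintype_fun_eq_card, Fintype.card_fin]
  omega




section construction
open scoped Classical

variable {n : ℕ} (G : SimpleGraph (Fin n)) [DecidableRel G.Adj]

/-- Indicator of isolated vertices. -/
def Pd : Fin n → ℝ := fun i => if ∀ j, ¬ G.Adj i j then 1 else 0

lemma Pd_nonneg (i : Fin n) : 0 ≤ Pd G i := by unfold Pd; split <;> norm_num

noncomputable def Nmat : Matrix (Fin n) (Fin n) ℝ := G.lapMatrix ℝ + Matrix.diagonal (Pd G)

noncomputable def wdeg (i : Fin n) : ℝ := (G.degree i : ℝ) + Pd G i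

lemma wdeg_pos (i : Fin n) : 0 < wdeg G i := by
  unfold wdeg Pd
  by_cases h : ∀ j, ¬ G.Adj i j
  · rw [if_pos h]; positivity
  · rw [if_neg h]
    push_neg at h
    have : 0 < G.degree i := (G.degree_pos_iff_exists_adj i).mpr h
    simpa using (Nat.cast_pos (α := ℝ)).mpr this

lemma sqrt_wdeg_pos (i : Fin n) : 0 < Real.sqrt (wdeg G i) :=
  Real.sqrt_pos.mpr (wdeg_pos G i)

noncomputable def Emat : Matrix (Fin n) (Fin n) ℝ :=
  Matrix.diagonal (fun i => (Real.sqrt (wdeg G i))⁻¹)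

noncomputable def E'mat : Matrix (Fin n) (Fin n) ℝ :=
  Matrix.diagonal (fun i => Real.sqrt (wdeg G i))

noncomputable def Mmat : Matrix (Fin n) (Fin n) ℝ := Emat G * Nmat G * Emat G

lemma Nmat_apply_ne {i j : Fin n} (hij : i ≠ j) :
    Nmat G i j = if G.Adj i j then -1 else 0 := by
  simp only [Nmat, SimpleGraph.lapMatrix, SimpleGraph.degMatrix, Matrix.add_apply,
    Matrix.sub_apply, Matrix.diagonal_apply_ne _ hij, SimpleGraph.adjMatrix_apply]
  split <;> norm_num

lemma Nmat_apply_eq (i : Fin n) : Nmat G i i = wdeg G i := by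
  simp only [Nmat, SimpleGraph.lapMatrix, SimpleGraph.degMatrix, Matrix.add_apply,
    Matrix.sub_apply, Matrix.diagonal_apply_eq, SimpleGraph.adjMatrix_apply, wdeg,
    SimpleGraph.irrefl]
  norm_num

lemma Mmat_apply (i j : Fin n) :
    Mmat G i j = (Real.sqrt (wdeg G i))⁻¹ * Nmat G i j * (Real.sqrt (wdeg G j))⁻¹ := by
  simp only [Mmat, Emat, Matrix.mul_diagonal, Matrix.diagonal_mul]

lemma Mmat_diag (i : Fin n) : Mmat G i i = 1 := by
  rw [Mmat_apply, Nmat_apply_eq]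
  have h := sqrt_wdeg_pos G i
  rw [← Real.mul_self_sqrt (wdeg_pos G i).le]
  field_simp
  rw [Real.sqrt_sq h.le]

lemma Mmat_adj {i j : Fin n} (hadj : G.Adj i j) : Mmat G i j < 0 := by
  rw [Mmat_apply, Nmat_apply_ne G (G.ne_of_adj hadj), if_pos hadj]
  have hi := sqrt_wdeg_pos G i
  have hj := sqrt_wdeg_pos G j
  have : 0 < (Real.sqrt (wdeg G i))⁻¹ * (Real.sqrt (wdeg G j))⁻¹ := by positivity
  nlinarith

lemma Mmat_nonadj {i j : Fin n} (hij : i ≠ j) (h : ¬ G.Adj i j) : Mmat G i j = 0 := by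
  rw [Mmat_apply, Nmat_apply_ne G hij, if_neg h, mul_zero, zero_mul]

lemma posSemidef_Nmat : (Nmat G).PosSemidef :=
  (SimpleGraph.posSemidef_lapMatrix ℝ G).add
    (Matrix.posSemidef_diagonal_iff.mpr (Pd_nonneg G))

lemma Emat_conjTranspose : (Emat G)ᴴ = Emat G := by
  rw [Emat, Matrix.diagonal_conjTranspose]
  congr 1

lemma posSemidef_Mmat : (Mmat G).PosSemidef := by
  have h := (posSemidef_Nmat G).conjTranspose_mul_mul_same (Emat G)
  rwa [Emat_conjTranspose] at h



lemma kerN_iff (x : Fin n → ℝ) : Nmat G *ᵥ x = 0 ↔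
    ((∀ i j, G.Reachable i j → x i = x j) ∧ ∀ i, (∀ j, ¬ G.Adj i j) → x i = 0) := by
  rw [← (posSemidef_Nmat G).dotProduct_mulVec_zero_iff, star_trivial]
  have hsplit : x ⬝ᵥ Nmat G *ᵥ x =
      x ⬝ᵥ (G.lapMatrix ℝ) *ᵥ x + x ⬝ᵥ (Matrix.diagonal (Pd G)) *ᵥ x := by
    rw [Nmat, Matrix.add_mulVec, dotProduct_add]
  have hL0 : 0 ≤ x ⬝ᵥ (G.lapMatrix ℝ) *ᵥ x := by
    have := (SimpleGraph.posSemidef_lapMatrix ℝ G).dotProduct_mulVec_nonneg x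
    rwa [star_trivial] at this
  have hPeq : x ⬝ᵥ (Matrix.diagonal (Pd G)) *ᵥ x = ∑ i, Pd G i * x i ^ 2 := by
    simp only [dotProduct, Matrix.mulVec_diagonal]
    exact Finset.sum_congr rfl fun i _ => by ring
  have hP0 : 0 ≤ x ⬝ᵥ (Matrix.diagonal (Pd G)) *ᵥ x := by
    rw [hPeq]
    exact Finset.sum_nonneg fun i _ => mul_nonneg (Pd_nonneg G i) (sq_nonneg _)
  rw [hsplit, add_eq_zero_iff_of_nonneg hL0 hP0]
  have h1 : x ⬝ᵥ (G.lapMatrix ℝ) *ᵥ x = 0 ↔ ∀ i j, G.Reachable i j → x i = x j := by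
    rw [← Matrix.toLinearMap₂'_apply']
    exact SimpleGraph.lapMatrix_toLinearMap₂'_apply'_eq_zero_iff_forall_reachable G x
  have h2 : x ⬝ᵥ (Matrix.diagonal (Pd G)) *ᵥ x = 0 ↔ ∀ i, (∀ j, ¬ G.Adj i j) → x i = 0 := by
    rw [hPeq, Finset.sum_eq_zero_iff_of_nonneg
      (fun i _ => mul_nonneg (Pd_nonneg G i) (sq_nonneg _))]
    constructor
    · intro h i hiso
      have := h i (Finset.mem_univ i)
      rw [Pd, if_pos hiso, one_mul] at this
      exact pow_eq_zero_iff (by norm_num) |>.mp this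
    · intro h i _
      by_cases hiso : ∀ j, ¬ G.Adj i j
      · rw [h i hiso]; ring
      · rw [Pd, if_neg hiso, zero_mul]
  rw [h1, h2]



lemma Emat_mulVec_eq_zero {y : Fin n → ℝ} : Emat G *ᵥ y = 0 ↔ y = 0 := by
  constructor
  · intro h
    funext i
    have hi := congrFun h i
    rw [Emat, Matrix.mulVec_diagonal] at hi
    have hne : (Real.sqrt (wdeg G i))⁻¹ ≠ 0 := inv_ne_zero (sqrt_wdeg_pos G i).ne'
    simpa [Pi.zero_apply, mul_eq_zero, hne] using hi
  · intro h; rw [h, Matrix.mulVec_zero]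

lemma Emat_E'mat_mulVec (y : Fin n → ℝ) : Emat G *ᵥ (E'mat G *ᵥ y) = y := by
  funext i
  rw [Emat, E'mat, Matrix.mulVec_diagonal, Matrix.mulVec_diagonal, ← mul_assoc,
    inv_mul_cancel₀ (sqrt_wdeg_pos G i).ne', one_mul]

lemma E'mat_Emat_mulVec (y : Fin n → ℝ) : E'mat G *ᵥ (Emat G *ᵥ y) = y := by
  funext i
  rw [Emat, E'mat, Matrix.mulVec_diagonal, Matrix.mulVec_diagonal, ← mul_assoc,
    mul_inv_cancel₀ (sqrt_wdeg_pos G i).ne', one_mul]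

lemma Mmat_mulVec (x : Fin n → ℝ) :
    Mmat G *ᵥ x = Emat G *ᵥ (Nmat G *ᵥ (Emat G *ᵥ x)) := by
  rw [Matrix.mulVec_mulVec, Matrix.mulVec_mulVec, Mmat]

lemma kerM_iff (x : Fin n → ℝ) : Mmat G *ᵥ x = 0 ↔ Nmat G *ᵥ (Emat G *ᵥ x) = 0 := by
  rw [Mmat_mulVec, Emat_mulVec_eq_zero]

/-- The kernel of `M` is isomorphic to the kernel of `N`. -/
noncomputable def kerMEquiv :
    LinearMap.ker (Mmat G).mulVecLin ≃ₗ[ℝ] LinearMap.ker (Nmat G).mulVecLin where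
  toFun x := ⟨Emat G *ᵥ x.1, by
    have hx := x.2
    rw [LinearMap.mem_ker, Matrix.mulVecLin_apply] at hx ⊢
    exact (kerM_iff G x.1).mp hx⟩
  invFun y := ⟨E'mat G *ᵥ y.1, by
    have hy := y.2
    rw [LinearMap.mem_ker, Matrix.mulVecLin_apply] at hy ⊢
    rw [kerM_iff, Emat_E'mat_mulVec, hy]⟩
  left_inv x := Subtype.ext (E'mat_Emat_mulVec G x.1)
  right_inv y := Subtype.ext (Emat_E'mat_mulVec G y.1)
  map_add' a b := Subtype.ext (by simp [Matrix.mulVec_add])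
  map_smul' t a := Subtype.ext (by simp [Matrix.mulVec_smul])

/-- The kernel of `N` is isomorphic to the functions on nontrivial components. -/
noncomputable def kerNEquiv :
    LinearMap.ker (Nmat G).mulVecLin ≃ₗ[ℝ] (NT G → ℝ) where
  toFun x C := x.1 (rep G C.1)
  map_add' a b := rfl
  map_smul' t a := rfl
  invFun f := ⟨fun i => if h : (∃ u v : Fin n, u ≠ v ∧
        G.connectedComponentMk u = G.connectedComponentMk i ∧
        G.connectedComponentMk v = G.connectedComponentMk i) then
      f ⟨G.connectedComponentMk i, h⟩ else 0, by
    rw [LinearMap.mem_ker, Matrix.mulVecLin_apply, kerN_iff]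
    constructor
    · intro i j hreach
      have hmk : G.connectedComponentMk i = G.connectedComponentMk j :=
        SimpleGraph.ConnectedComponent.sound hreach
      simp only [hmk]
    · intro i hiso
      rw [dif_neg]
      intro h
      obtain ⟨j, hadj⟩ := nontrivial_imp_adj h
      exact hiso j hadj⟩
  left_inv x := by
    have hx := x.2
    rw [LinearMap.mem_ker, Matrix.mulVecLin_apply, kerN_iff] at hx
    refine Subtype.ext (funext fun i => ?_)
    dsimp only
    by_cases h : ∃ u v : Fin n, u ≠ v ∧
        G.connectedComponentMk u = G.connectedComponentMk i ∧
        G.connectedComponentMk v = G.connectedComponentMk i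
    · rw [dif_pos h]
      exact hx.1 _ _ (SimpleGraph.ConnectedComponent.eq.mp (rep_spec G _))
    · rw [dif_neg h]
      exact (hx.2 i (fun j hadj => h (adj_imp_nontrivial hadj))).symm
  right_inv f := by
    funext C
    obtain ⟨c, hP⟩ := C
    dsimp only
    have hc : G.connectedComponentMk (rep G c) = c := rep_spec G c
    simp only [hc]
    rw [dif_pos hP]



lemma finrank_kerM [Fintype (NT G)] :
    Module.finrank ℝ (LinearMap.ker (Mmat G).mulVecLin) = Nat.card (NT G) := by
  rw [((kerMEquiv G).trans (kerNEquiv G)).finrank_eq,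
    Module.finrank_fintype_fun_eq_card, Nat.card_eq_fintype_card]

theorem mem_bound :
    ∃ p : Fin n → EuclideanSpace ℝ (Fin (n - Nat.card (NT G))),
      (∀ i, ‖p i‖ = 1) ∧ (∀ i j, G.Adj i j → ⟪p i, p j⟫ < 0) ∧
      (∀ i j, i ≠ j → ¬ G.Adj i j → ⟪p i, p j⟫ = 0) := by
  haveI : Fintype (NT G) := Fintype.ofFinite _
  have hM := posSemidef_Mmat G
  open scoped MatrixOrder in
  set S := CFC.sqrt (Mmat G) with hSdef
  open scoped MatrixOrder in
  have hS : S.PosSemidef := (CFC.sqrt_nonneg (Mmat G)).posSemidef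
  open scoped MatrixOrder in
  have hSS : S * S = Mmat G := CFC.sqrt_mul_sqrt_self (Mmat G) hM.nonneg
  have hSsymm : Sᵀ = S := by
    rw [← Matrix.conjTranspose_eq_transpose_of_trivial]
    exact hS.1
  have hsym : ∀ a b, S a b = S b a := by
    intro a b
    have h := congrFun (congrFun hSsymm a) b
    rw [Matrix.transpose_apply] at h
    exact h.symm
  set eqv := WithLp.linearEquiv 2 ℝ (Fin n → ℝ) with heqv
  set p0 : Fin n → EuclideanSpace ℝ (Fin n) := fun i => eqv.symm (fun m => S m i) with hp0
  have hcoord : ∀ (i : Fin n) (m : Fin n), p0 i m = S m i := by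
    intro i m
    simp [hp0, heqv]
  have hip : ∀ i j, ⟪p0 i, p0 j⟫ = Mmat G i j := by
    intro i j
    rw [PiLp.inner_apply, ← hSS, Matrix.mul_apply]
    refine Finset.sum_congr rfl fun m _ => ?_
    simp only [RCLike.inner_apply, conj_trivial, hcoord]
    rw [hsym i m]
    ring
  have hnorm : ∀ i, ‖p0 i‖ = 1 := by
    intro i
    have h := hip i i
    rw [Mmat_diag, real_inner_self_eq_norm_sq] at h
    nlinarith [norm_nonneg (p0 i)]
  set T := linComb p0 with hT
  have hTeq : ∀ c, T c = eqv.symm (S *ᵥ c) := by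
    intro c
    rw [hT, linComb_apply]
    have hmv : (S *ᵥ c) = ∑ i, c i • (fun m => S m i) := by
      funext m
      simp [Matrix.mulVec, dotProduct, Finset.sum_apply, mul_comm]
    rw [hmv, map_sum]
    refine Finset.sum_congr rfl fun i _ => ?_
    rw [_root_.map_smul]
  have hTker : ∀ c, T c = 0 ↔ Mmat G *ᵥ c = 0 := by
    intro c
    rw [hTeq, LinearEquiv.map_eq_zero_iff]
    constructor
    · intro h
      rw [← hSS, ← Matrix.mulVec_mulVec, h, Matrix.mulVec_zero]
    · intro h
      have hdot : (S *ᵥ c) ⬝ᵥ (S *ᵥ c) = c ⬝ᵥ (Mmat G *ᵥ c) := by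
        calc (S *ᵥ c) ⬝ᵥ (S *ᵥ c) = (c ᵥ* S) ⬝ᵥ (S *ᵥ c) := by
              rw [← Matrix.mulVec_transpose, hSsymm]
          _ = c ⬝ᵥ (S *ᵥ (S *ᵥ c)) := (Matrix.dotProduct_mulVec _ _ _).symm
          _ = c ⬝ᵥ (Mmat G *ᵥ c) := by rw [Matrix.mulVec_mulVec, hSS]
      rw [h, dotProduct_zero] at hdot
      exact dotProduct_self_eq_zero.mp hdot
  have hkerT : Module.finrank ℝ (LinearMap.ker T) = Nat.card (NT G) := by
    have hk : LinearMap.ker T = LinearMap.ker (Mmat G).mulVecLin := by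
      ext c
      rw [LinearMap.mem_ker, LinearMap.mem_ker, Matrix.mulVecLin_apply, hTker]
    rw [hk, finrank_kerM]
  have hrank := LinearMap.finrank_range_add_finrank_ker T
  rw [hkerT, Module.finrank_fintype_fun_eq_card, Fintype.card_fin] at hrank
  have hrange : Module.finrank ℝ (LinearMap.range T) = n - Nat.card (NT G) := by omega
  have hmem : ∀ i, p0 i ∈ LinearMap.range T := by
    intro i
    refine ⟨Pi.single i 1, ?_⟩
    rw [hT, linComb_apply]
    simp [Pi.single_apply, ite_smul]
  let e : LinearMap.range T ≃ₗᵢ[ℝ] EuclideanSpace ℝ (Fin (n - Nat.card (NT G))) :=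
    ((stdOrthonormalBasis ℝ (LinearMap.range T)).reindex (finCongr hrange)).repr
  refine ⟨fun i => e ⟨p0 i, hmem i⟩, fun i => ?_, fun i j hadj => ?_,
    fun i j hij hnadj => ?_⟩
  · rw [LinearIsometryEquiv.norm_map]
    exact hnorm i
  · rw [LinearIsometryEquiv.inner_map_map, Submodule.coe_inner, hip]
    exact Mmat_adj G hadj
  · rw [LinearIsometryEquiv.inner_map_map, Submodule.coe_inner, hip]
    exact Mmat_nonadj G hij hnadj

end construction

end Stmt14

open scoped RealInnerProductSpace

theorem stmt14 {n k : ℕ} (G : SimpleGraph (Fin n))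
    (hk : k = Nat.card {c : G.ConnectedComponent //
      ∃ u v : Fin n, u ≠ v ∧ G.connectedComponentMk u = c ∧
        G.connectedComponentMk v = c}) :
    IsLeast {r : ℕ | ∃ p : Fin n → EuclideanSpace ℝ (Fin r),
      (∀ i, ‖p i‖ = 1) ∧
      (∀ i j, G.Adj i j → ⟪p i, p j⟫ < 0) ∧
      (∀ i j, i ≠ j → ¬ G.Adj i j → ⟪p i, p j⟫ = 0)} (n - k) := by
  haveI : DecidableRel G.Adj := Classical.decRel _
  subst hk
  constructor
  · obtain ⟨p, h1, h2, h3⟩ := Stmt14.mem_bound G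
    exact ⟨p, h1, h2, h3⟩
  · rintro r ⟨p, h1, h2, h3⟩
    have h := Stmt14.lower_bound h1 h2 h3
    have hc : Nat.card (Stmt14.NT G) = Nat.card {c : G.ConnectedComponent //
      ∃ u v : Fin n, u ≠ v ∧ G.connectedComponentMk u = c ∧
        G.connectedComponentMk v = c} := rfl
    omega
end

section
/- Let D be an n × n unit spherical EDM of embedding dimension r with every off-diagonal entry ≥ 2, write D = 2(E - I) + 2Δ and Dw = e. If Δ is irreducible, then r = n - 1 (D is the EDM of a simplex) and w > 0 entrywise. -/
open Matrix

/-- A nonnegative matrix is reducible if it is a `1 × 1` zero matrix or can be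
symmetrically permuted into a nontrivial block upper triangular form. -/
def Matrix.IsReducible {m : Type*} [Fintype m] [DecidableEq m]
    (A : Matrix m m ℝ) : Prop :=
  (Fintype.card m = 1 ∧ A = 0) ∨
    ∃ S : Finset m, S.Nonempty ∧ S ≠ Finset.univ ∧
      ∀ i ∉ S, ∀ j ∈ S, A i j = 0

open Finset RealInnerProductSpace

section Aux

variable {n m : ℕ} {x : Fin n → EuclideanSpace ℝ (Fin m)}
  {Δ : Matrix (Fin n) (Fin n) ℝ}

private lemma inner_sum_smul (x : Fin n → EuclideanSpace ℝ (Fin m))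
    (a b : Fin n → ℝ) :
    ⟪∑ i, a i • x i, ∑ j, b j • x j⟫
      = ∑ i, ∑ j, a i * (b j * ⟪x i, x j⟫) := by
  rw [sum_inner]
  refine Finset.sum_congr rfl fun i _ => ?_
  rw [real_inner_smul_left, inner_sum, Finset.mul_sum]
  refine Finset.sum_congr rfl fun j _ => ?_
  rw [real_inner_smul_right]

/-- If `v` is in the kernel (i.e. `∑ v i • x i = 0`), then so is `|v|`. -/
private lemma aux_abs_ker
    (hG : ∀ i j, ⟪x i, x j⟫ = (if i = j then 1 else 0) - Δ i j)
    (hΔ0 : ∀ i, Δ i i = 0) (hΔnn : ∀ i j, 0 ≤ Δ i j)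
    (v : Fin n → ℝ) (hv : ∑ i, v i • x i = 0) :
    ∑ i, |v i| • x i = 0 := by
  have key : ⟪∑ i, |v i| • x i, ∑ j, |v j| • x j⟫
      ≤ ⟪∑ i, v i • x i, ∑ j, v j • x j⟫ := by
    rw [inner_sum_smul, inner_sum_smul]
    refine Finset.sum_le_sum fun i _ => Finset.sum_le_sum fun j _ => ?_
    rcases eq_or_ne i j with rfl | hij
    · rw [hG i i, hΔ0 i]
      norm_num
    · rw [hG i j, if_neg hij]
      have h1 : v i * v j ≤ |v i| * |v j| := by
        calc v i * v j ≤ |v i * v j| := le_abs_self _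
        _ = |v i| * |v j| := abs_mul _ _
      nlinarith [hΔnn i j]
  rw [hv] at key
  simp only [inner_zero_left] at key
  exact real_inner_self_nonpos.mp key

/-- A nonzero nonnegative kernel vector is strictly positive, by irreducibility. -/
private lemma aux_pos_ker
    (hG : ∀ i j, ⟪x i, x j⟫ = (if i = j then 1 else 0) - Δ i j)
    (hΔnn : ∀ i j, 0 ≤ Δ i j) (hirr : ¬ Δ.IsReducible)
    (u : Fin n → ℝ) (hu0 : ∀ i, 0 ≤ u i) (hune : u ≠ 0)
    (hu : ∑ i, u i • x i = 0) : ∀ i, 0 < u i := by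
  classical
  have hfix : ∀ i, u i = ∑ j, Δ i j * u j := by
    intro i
    have h0 : ⟪x i, ∑ j, u j • x j⟫ = 0 := by rw [hu]; simp
    rw [inner_sum] at h0
    have h1 : ∀ j, ⟪x i, u j • x j⟫
        = (if j = i then u i else 0) - Δ i j * u j := by
      intro j
      rw [real_inner_smul_right, hG i j]
      rcases eq_or_ne i j with rfl | hij
      · simp; ring
      · rw [if_neg hij, if_neg (Ne.symm hij)]; ring
    rw [Finset.sum_congr rfl fun j _ => h1 j, Finset.sum_sub_distrib,
      Finset.sum_ite_eq' Finset.univ i (fun _ => u i)] at h0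
    simp only [Finset.mem_univ, if_pos] at h0
    linarith
  set S : Finset (Fin n) := Finset.univ.filter (fun i => u i ≠ 0) with hS
  have hSne : S.Nonempty := by
    obtain ⟨i, hi⟩ : ∃ i, u i ≠ 0 := by
      by_contra h; push_neg at h; exact hune (funext h)
    exact ⟨i, by simp [hS, hi]⟩
  have hSuniv : S = Finset.univ := by
    by_contra hne
    apply hirr; right
    refine ⟨S, hSne, hne, ?_⟩
    intro i hiS j hjS
    have hui : u i = 0 := by
      by_contra h; exact hiS (by simp [hS, h])
    have hsum : ∑ j, Δ i j * u j = 0 := by rw [← hfix i, hui]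
    have hterm := (Finset.sum_eq_zero_iff_of_nonneg
      (fun j _ => mul_nonneg (hΔnn i j) (hu0 j))).mp hsum j (Finset.mem_univ j)
    have huj : u j ≠ 0 := by
      rw [hS, Finset.mem_filter] at hjS; exact hjS.2
    rcases mul_eq_zero.mp hterm with h | h
    · exact h
    · exact absurd h huj
  intro i
  have hi : i ∈ S := hSuniv.symm ▸ Finset.mem_univ i
  rw [hS, Finset.mem_filter] at hi
  exact lt_of_le_of_ne (hu0 i) (Ne.symm hi.2)

/-- Any nonzero kernel vector is proportional to its (strictly positive)
absolute value. -/
private lemma aux_prop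
    (hG : ∀ i j, ⟪x i, x j⟫ = (if i = j then 1 else 0) - Δ i j)
    (hΔ0 : ∀ i, Δ i i = 0) (hΔnn : ∀ i j, 0 ≤ Δ i j) (hirr : ¬ Δ.IsReducible)
    (v : Fin n → ℝ) (hv : ∑ i, v i • x i = 0) (hvne : v ≠ 0) :
    (∀ i, 0 < |v i|) ∧ ∀ k i, |v k| * v i = v k * |v i| := by
  have habs := aux_abs_ker hG hΔ0 hΔnn v hv
  have habsne : (fun i => |v i|) ≠ 0 := by
    intro h
    apply hvne
    funext i
    have := congrFun h i
    simpa using abs_eq_zero.mp this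
  have hpos := aux_pos_ker hG hΔnn hirr (fun i => |v i|)
    (fun i => abs_nonneg _) habsne habs
  refine ⟨hpos, fun k i => ?_⟩
  set z : Fin n → ℝ := fun i => |v k| * v i - v k * |v i| with hzdef
  have hz : ∑ i, z i • x i = 0 := by
    have : ∑ i, z i • x i
        = |v k| • (∑ i, v i • x i) - v k • (∑ i, |v i| • x i) := by
      rw [Finset.smul_sum, Finset.smul_sum, ← Finset.sum_sub_distrib]
      refine Finset.sum_congr rfl fun i _ => ?_
      rw [smul_smul, smul_smul, ← sub_smul]
    rw [this, hv, habs]; simp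
  have hzk : z k = 0 := by simp [hzdef, mul_comm]
  have hz0 : z = 0 := by
    by_contra hzne
    have habs2 := aux_abs_ker hG hΔ0 hΔnn z hz
    have habsne2 : (fun i => |z i|) ≠ 0 := by
      intro h
      apply hzne
      funext i
      have := congrFun h i
      simpa using abs_eq_zero.mp this
    have hpos2 := aux_pos_ker hG hΔnn hirr (fun i => |z i|)
      (fun i => abs_nonneg _) habsne2 habs2
    have h5 : (0:ℝ) < |z k| := by simpa using hpos2 k
    rw [hzk] at h5
    simp at h5
  have := congrFun hz0 i
  simp only [hzdef, Pi.zero_apply] at this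
  linarith

/-- If `G *ᵥ y` is a positive constant vector, then `y` is nonnegative. -/
private lemma aux_nonneg
    (hG : ∀ i j, ⟪x i, x j⟫ = (if i = j then 1 else 0) - Δ i j)
    (hΔnn : ∀ i j, 0 ≤ Δ i j)
    (a : ℝ) (ha : 0 < a) (y : Fin n → ℝ)
    (hy : ∀ i, ⟪x i, ∑ j, y j • x j⟫ = a) : ∀ i, 0 ≤ y i := by
  set z : Fin n → ℝ := fun i => max (-(y i)) 0 with hzdef
  have hz0 : ∀ i, 0 ≤ z i := fun i => le_max_right _ _
  have hzy : ∀ i, 0 ≤ y i + z i := by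
    intro i
    have := le_max_left (-(y i)) 0
    simp only [hzdef]
    linarith
  have hkey : a * ∑ i, z i ≤ 0 := by
    have e1 : ∑ i, z i * ⟪x i, ∑ j, y j • x j⟫ = a * ∑ i, z i := by
      rw [Finset.sum_congr rfl fun i _ => by rw [hy i]]
      rw [← Finset.sum_mul]; ring
    have e2 : ∑ i, z i * ⟪x i, ∑ j, y j • x j⟫
        = ∑ i, ∑ j, z i * (y j * ⟪x i, x j⟫) := by
      refine Finset.sum_congr rfl fun i _ => ?_
      rw [inner_sum, Finset.mul_sum]
      refine Finset.sum_congr rfl fun j _ => ?_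
      rw [real_inner_smul_right]
    have e3 : ∑ i, ∑ j, z i * (y j * ⟪x i, x j⟫)
        ≤ ∑ i, ∑ j, -(z i * (z j * ⟪x i, x j⟫)) := by
      refine Finset.sum_le_sum fun i _ => Finset.sum_le_sum fun j _ => ?_
      have hcore : z i * ((y j + z j) * ⟪x i, x j⟫) ≤ 0 := by
        rcases eq_or_ne i j with rfl | hij
        · rcases le_or_gt 0 (y i) with h | h
          · have hz : z i = 0 := by
              simp only [hzdef]
              exact max_eq_right (neg_nonpos.mpr h)
            rw [hz]
            simp
          · have hz : z i = -(y i) := by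
              simp only [hzdef]
              exact max_eq_left (by linarith)
            rw [hz]
            have hyy : y i + -(y i) = 0 := by ring
            rw [hyy]
            simp
        · rw [hG i j, if_neg hij]
          have h1 : 0 ≤ z i * (y j + z j) := mul_nonneg (hz0 i) (hzy j)
          nlinarith [hΔnn i j]
      nlinarith [hcore]
    have e4 : ∑ i, ∑ j, -(z i * (z j * ⟪x i, x j⟫))
        = -⟪∑ i, z i • x i, ∑ j, z j • x j⟫ := by
      rw [inner_sum_smul, ← Finset.sum_neg_distrib]
      refine Finset.sum_congr rfl fun i _ => ?_
      rw [← Finset.sum_neg_distrib]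
    have e5 : (0:ℝ) ≤ ⟪∑ i, z i • x i, ∑ j, z j • x j⟫ :=
      real_inner_self_nonneg
    calc a * ∑ i, z i = ∑ i, z i * ⟪x i, ∑ j, y j • x j⟫ := e1.symm
      _ = ∑ i, ∑ j, z i * (y j * ⟪x i, x j⟫) := e2
      _ ≤ ∑ i, ∑ j, -(z i * (z j * ⟪x i, x j⟫)) := e3
      _ = -⟪∑ i, z i • x i, ∑ j, z j • x j⟫ := e4
      _ ≤ 0 := by linarith
  have hsumnn : (0:ℝ) ≤ ∑ i, z i := Finset.sum_nonneg fun i _ => hz0 i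
  have hsum0 : ∑ i, z i = 0 := by nlinarith
  intro i
  have hzi : z i = 0 := (Finset.sum_eq_zero_iff_of_nonneg
    (fun i _ => hz0 i)).mp hsum0 i (Finset.mem_univ i)
  have := le_max_left (-(y i)) 0
  simp only [hzdef] at hzi
  rw [hzi] at this
  linarith

end Aux

theorem stmt16 {n m r : ℕ} (D : Matrix (Fin n) (Fin n) ℝ)
    (p : Fin n → EuclideanSpace ℝ (Fin m))
    (hD : ∀ i j, D i j = dist (p i) (p j) ^ 2)
    (hsphere : ∃ c, ∀ i, dist (p i) c = 1)
    (hr : Module.finrank ℝ (vectorSpan ℝ (Set.range p)) = r)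
    (hoff : ∀ i j : Fin n, i ≠ j → 2 ≤ D i j)
    (Δ : Matrix (Fin n) (Fin n) ℝ)
    (hΔ : D = 2 • ((Matrix.of fun _ _ => (1 : ℝ)) - (1 : Matrix (Fin n) (Fin n) ℝ)) + 2 • Δ)
    (w : Fin n → ℝ) (hw : D *ᵥ w = fun _ => 1)
    (hirr : ¬ Δ.IsReducible) :
    r = n - 1 ∧ ∀ i, 0 < w i := by
  classical
  -- entrywise form of hΔ
  have hΔ' : ∀ i j, D i j = 2 * (1 - (if i = j then (1:ℝ) else 0)) + 2 * Δ i j := by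
    intro i j
    have h := congrFun (congrFun hΔ i) j
    rw [Matrix.add_apply, Matrix.smul_apply, Matrix.smul_apply, Matrix.sub_apply,
      Matrix.one_apply, Matrix.of_apply] at h
    rw [h]
    simp only [nsmul_eq_mul, Nat.cast_ofNat]
  -- trivial case n = 0
  rcases Nat.eq_zero_or_pos n with hn0 | hnpos
  · subst hn0
    constructor
    · have hre : Set.range p = (∅ : Set (EuclideanSpace ℝ (Fin m))) :=
        Set.range_eq_empty p
      rw [hre, vectorSpan_empty] at hr
      simpa using hr.symm
    · intro i; exact i.elim0
  -- case n = 1 contradicts irreducibility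
  by_cases hn1 : n = 1
  · exfalso
    apply hirr; left
    constructor
    · simp [hn1]
    · ext i j
      have hij : i = j := by
        subst hn1; exact Subsingleton.elim i j
      subst hij
      have h1 := hΔ' i i
      have h2 : D i i = 0 := by rw [hD]; simp
      norm_num at h1
      simp only [Matrix.zero_apply]
      linarith
  have hn2 : 2 ≤ n := by omega
  obtain ⟨c, hc⟩ := hsphere
  set x : Fin n → EuclideanSpace ℝ (Fin m) := fun i => p i - c with hxdef
  have hxn : ∀ i, ‖x i‖ = 1 := by
    intro i; rw [hxdef]; rw [← dist_eq_norm]; exact hc i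
  have hDx : ∀ i j, D i j = 2 - 2 * ⟪x i, x j⟫ := by
    intro i j
    rw [hD]
    have hd : dist (p i) (p j) = ‖x i - x j‖ := by
      rw [dist_eq_norm, hxdef]
      congr 1
      simp only [sub_sub_sub_cancel_right]
    rw [hd, norm_sub_sq_real, hxn, hxn]
    ring
  have hG : ∀ i j, ⟪x i, x j⟫ = (if i = j then 1 else 0) - Δ i j := by
    intro i j
    have h1 := hΔ' i j
    have h2 := hDx i j
    rcases eq_or_ne i j with rfl | hij
    · simp only [if_pos rfl] at h1 ⊢; linarith
    · simp only [if_neg hij] at h1 ⊢; linarith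
  have hΔ0 : ∀ i, Δ i i = 0 := by
    intro i
    have h1 := hΔ' i i
    have h2 : D i i = 0 := by rw [hD]; simp
    norm_num at h1
    linarith
  have hΔnn : ∀ i j, 0 ≤ Δ i j := by
    intro i j
    rcases eq_or_ne i j with rfl | hij
    · rw [hΔ0 i]
    · have h1 := hΔ' i j
      have h2 := hoff i j hij
      simp only [if_neg hij] at h1
      linarith
  -- affine independence
  have hai : AffineIndependent ℝ p := by
    rw [affineIndependent_iff]
    intro s wt hsum hcomb
    set v : Fin n → ℝ := fun i => if i ∈ s then wt i else 0 with hvdef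
    have hvsum : ∑ i, v i = 0 := by
      rw [hvdef]
      simp only []
      rw [Finset.sum_ite_mem, Finset.univ_inter]
      exact hsum
    have hvcomb : ∑ i, v i • p i = 0 := by
      have : ∀ i, v i • p i = if i ∈ s then wt i • p i else 0 := by
        intro i
        by_cases h : i ∈ s <;> simp [hvdef, h]
      rw [Finset.sum_congr rfl fun i _ => this i, Finset.sum_ite_mem,
        Finset.univ_inter]
      exact hcomb
    have hvx : ∑ i, v i • x i = 0 := by
      have hexp : ∑ i, v i • x i = (∑ i, v i • p i) - (∑ i, v i) • c := by
        rw [Finset.sum_smul, ← Finset.sum_sub_distrib]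
        refine Finset.sum_congr rfl fun i _ => ?_
        rw [hxdef, smul_sub]
      rw [hexp, hvcomb, hvsum]; simp
    have hv0 : v = 0 := by
      by_contra hvne
      obtain ⟨hpos, hprop⟩ := aux_prop hG hΔ0 hΔnn hirr v hvx hvne
      obtain ⟨k, hk⟩ := Function.ne_iff.mp hvne
      have hsumeq : |v k| * (∑ i, v i) = v k * (∑ i, |v i|) := by
        rw [Finset.mul_sum, Finset.mul_sum]
        exact Finset.sum_congr rfl fun i _ => hprop k i
      rw [hvsum, mul_zero] at hsumeq
      have habs_sum_pos : 0 < ∑ i, |v i| :=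
        Finset.sum_pos (fun i _ => hpos i) ⟨k, Finset.mem_univ k⟩
      have : v k = 0 := by
        rcases mul_eq_zero.mp hsumeq.symm with h | h
        · exact h
        · linarith
      simp only [Pi.zero_apply] at hk
      exact hk this
    intro e he
    have := congrFun hv0 e
    simpa [hvdef, he] using this
  have hcard : Fintype.card (Fin n) = (n - 1) + 1 := by
    simp only [Fintype.card_fin]; omega
  have hrank := hai.finrank_vectorSpan hcard
  have hr' : r = n - 1 := by rw [← hr, hrank]
  refine ⟨hr', ?_⟩
  -- the weight vector
  set s₀ : ℝ := ∑ i, w i with hs₀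
  set t : ℝ := s₀ - 1/2 with ht
  clear_value t
  clear_value s₀
  have hweq : ∀ i, ⟪x i, ∑ j, w j • x j⟫ = t := by
    intro i
    have h1 := congrFun hw i
    simp only [Matrix.mulVec, dotProduct] at h1
    have h2 : ∑ j, D i j * w j
        = ∑ j, (2 * w j - 2 * (w j * ⟪x i, x j⟫)) := by
      refine Finset.sum_congr rfl fun j _ => ?_
      rw [hDx i j]; ring
    rw [h2, Finset.sum_sub_distrib] at h1
    have h3 : ⟪x i, ∑ j, w j • x j⟫ = ∑ j, w j * ⟪x i, x j⟫ := by
      rw [inner_sum]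
      exact Finset.sum_congr rfl fun j _ => real_inner_smul_right _ _ _
    have h4 : ∑ j, 2 * w j = 2 * s₀ := by
      rw [hs₀, Finset.mul_sum]
    have h5 : ∑ j, 2 * (w j * ⟪x i, x j⟫)
        = 2 * ∑ j, w j * ⟪x i, x j⟫ := by
      rw [Finset.mul_sum]
    rw [h4, h5] at h1
    rw [h3, ht]
    linarith
  -- fixed point equation  w i = (Δ w) i + t
  have hfixw : ∀ i, w i = (∑ j, Δ i j * w j) + t := by
    intro i
    have h := hweq i
    rw [inner_sum] at h
    have h1 : ∀ j, ⟪x i, w j • x j⟫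
        = (if j = i then w i else 0) - Δ i j * w j := by
      intro j
      rw [real_inner_smul_right, hG i j]
      rcases eq_or_ne i j with rfl | hij
      · simp; ring
      · rw [if_neg hij, if_neg (Ne.symm hij)]; ring
    rw [Finset.sum_congr rfl fun j _ => h1 j, Finset.sum_sub_distrib,
      Finset.sum_ite_eq' Finset.univ i (fun _ => w i)] at h
    simp only [Finset.mem_univ, if_pos] at h
    linarith
  rcases lt_trichotomy t 0 with htneg | htzero | htpos
  · -- t < 0 : impossible
    exfalso
    have hneg : ∀ i, ⟪x i, ∑ j, (-(w j)) • x j⟫ = -t := by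
      intro i
      have : ∑ j, (-(w j)) • x j = -(∑ j, w j • x j) := by
        rw [← Finset.sum_neg_distrib]
        exact Finset.sum_congr rfl fun j _ => by rw [neg_smul]
      rw [this, inner_neg_right, hweq i]
    have hwn : ∀ i, 0 ≤ -(w i) :=
      aux_nonneg hG hΔnn (-t) (by linarith) _ hneg
    have hwle : ∀ i, w i ≤ t := by
      intro i
      have hΔw : ∑ j, Δ i j * w j ≤ 0 := by
        apply Finset.sum_nonpos
        intro j _
        have := hwn j
        nlinarith [hΔnn i j]
      have := hfixw i
      linarith
    have hsle : s₀ ≤ n * t := by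
      have := Finset.sum_le_sum (fun i (_ : i ∈ Finset.univ) => hwle i)
      rw [Finset.sum_const, Finset.card_univ, Fintype.card_fin] at this
      rw [hs₀]
      simpa [nsmul_eq_mul] using this
    have hncast : (2:ℝ) ≤ (n:ℝ) := by exact_mod_cast hn2
    have hprod : 0 ≤ ((n:ℝ) - 2) * (-t) := mul_nonneg (by linarith) (by linarith)
    nlinarith [hprod, hsle, htneg]
  · -- t = 0 : kernel case
    have hker : ∀ i, ⟪x i, ∑ j, w j • x j⟫ = 0 := by
      intro i; rw [hweq i, htzero]
    have hq : ⟪∑ i, w i • x i, ∑ j, w j • x j⟫ = 0 := by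
      rw [sum_inner]
      refine Finset.sum_eq_zero fun i _ => ?_
      rw [real_inner_smul_left, hker i, mul_zero]
    have hξ : ∑ i, w i • x i = 0 := by
      have := real_inner_self_nonpos.mp (le_of_eq hq)
      exact this
    have hs₀val : s₀ = 1/2 := by rw [ht] at htzero; linarith
    have hwne : w ≠ 0 := by
      intro h
      rw [hs₀, h] at hs₀val
      simp at hs₀val
    obtain ⟨hpos, hprop⟩ := aux_prop hG hΔ0 hΔnn hirr w hξ hwne
    intro k
    have hsumeq : |w k| * s₀ = w k * (∑ i, |w i|) := by
      rw [hs₀, Finset.mul_sum, Finset.mul_sum]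
      exact Finset.sum_congr rfl fun i _ => hprop k i
    have habs_sum_pos : 0 < ∑ i, |w i| :=
      Finset.sum_pos (fun i _ => hpos i) ⟨k, Finset.mem_univ k⟩
    have hk := hpos k
    rw [hs₀val] at hsumeq
    nlinarith
  · -- t > 0
    have hwn : ∀ i, 0 ≤ w i := aux_nonneg hG hΔnn t htpos w hweq
    intro i
    have hΔw : 0 ≤ ∑ j, Δ i j * w j :=
      Finset.sum_nonneg fun j _ => mul_nonneg (hΔnn i j) (hwn j)
    have := hfixw i
    linarith
end

section
/- Let D be an n × n unit spherical EDM of embedding dimension r with n = r + 2. Then at least one off-diagonal entry of D is ≤ 2. Equivalently, any r + 2 points on the unit sphere in ℝ^r contain two points at distance at most √2. -/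
open Matrix Finset
open scoped RealInnerProductSpace

lemma aux_single {r : ℕ} (p : Fin (r + 2) → EuclideanSpace ℝ (Fin r))
    (hneg : ∀ i j : Fin (r + 2), i ≠ j → ⟪p i, p j⟫ < 0)
    (g : Fin (r + 1) → ℝ) (hg : ∀ i, 0 ≤ g i) (k : Fin (r + 1)) (hk : 0 < g k)
    (hsum : ∑ i, g i • p i.castSucc = 0) : False := by
  have h0 : ⟪p (Fin.last (r+1)), ∑ i, g i • p i.castSucc⟫ = 0 := by
    rw [hsum, inner_zero_right]
  rw [inner_sum] at h0
  simp_rw [real_inner_smul_right] at h0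
  have hne : ∀ i : Fin (r+1), Fin.last (r+1) ≠ i.castSucc :=
    fun i => (Fin.castSucc_lt_last i).ne'
  have hlt : ∑ i, g i * ⟪p (Fin.last (r+1)), p i.castSucc⟫ < 0 := by
    have h1 : ∀ i ∈ Finset.univ, g i * ⟪p (Fin.last (r+1)), p i.castSucc⟫ ≤ (0:ℝ) :=
      fun i _ => mul_nonpos_of_nonneg_of_nonpos (hg i) (hneg _ _ (hne i)).le
    have h2 : g k * ⟪p (Fin.last (r+1)), p k.castSucc⟫ < 0 :=
      mul_neg_of_pos_of_neg hk (hneg _ _ (hne k))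
    calc ∑ i, g i * ⟪p (Fin.last (r+1)), p i.castSucc⟫
        < ∑ _i : Fin (r+1), (0:ℝ) :=
          Finset.sum_lt_sum h1 ⟨k, Finset.mem_univ k, h2⟩
      _ = 0 := by simp
  linarith

theorem key_inner {r : ℕ} (p : Fin (r + 2) → EuclideanSpace ℝ (Fin r)) :
    ∃ i j : Fin (r + 2), i ≠ j ∧ 0 ≤ ⟪p i, p j⟫ := by
  by_contra h
  push_neg at h
  have hneg : ∀ i j : Fin (r + 2), i ≠ j → ⟪p i, p j⟫ < 0 := h
  set v : Fin (r + 1) → EuclideanSpace ℝ (Fin r) := fun i => p i.castSucc with hv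
  have hdep : ¬ LinearIndependent ℝ v := by
    intro hli
    have := hli.fintype_card_le_finrank
    simp [finrank_euclideanSpace_fin] at this
  obtain ⟨g, hsum, k, hk⟩ := Fintype.not_linearIndependent_iff.mp hdep
  set P : Finset (Fin (r+1)) := Finset.univ.filter (fun i => 0 < g i) with hP
  set N : Finset (Fin (r+1)) := Finset.univ.filter (fun i => g i < 0) with hN
  by_cases hNe : N = ∅
  · have hg : ∀ i, 0 ≤ g i := by
      intro i
      by_contra hi
      have : i ∈ N := by simp only [hN, Finset.mem_filter]; constructor; · simp
                         · linarith [lt_of_not_ge hi]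
      rw [hNe] at this
      exact absurd this (Finset.notMem_empty i)
    exact aux_single p hneg g hg k (lt_of_le_of_ne (hg k) (Ne.symm hk)) hsum
  · by_cases hPe : P = ∅
    · have hg : ∀ i, 0 ≤ -g i := by
        intro i
        by_contra hi
        have : i ∈ P := by simp only [hP, Finset.mem_filter]; constructor; · simp
                           · nlinarith [lt_of_not_ge hi]
        rw [hPe] at this
        exact absurd this (Finset.notMem_empty i)
      have hsum' : ∑ i, (-g i) • p i.castSucc = 0 := by
        have : ∑ i, (-g i) • p i.castSucc = -∑ i, g i • p i.castSucc := by
          simp [neg_smul]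
        rw [this, hsum, neg_zero]
      exact aux_single p hneg (fun i => -g i) hg k
        (lt_of_le_of_ne (hg k) (by simpa using hk)) hsum'
    · obtain ⟨a, ha⟩ := Finset.nonempty_of_ne_empty hPe
      obtain ⟨b, hb⟩ := Finset.nonempty_of_ne_empty hNe
      set w : EuclideanSpace ℝ (Fin r) := ∑ i ∈ P, g i • v i with hw
      have hsplit : w + ∑ i ∈ N, g i • v i = 0 := by
        have h1 : ∑ i ∈ Pᶜ, g i • v i = ∑ i ∈ N, g i • v i := by
          refine (Finset.sum_subset ?_ ?_).symm
          · intro i hi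
            simp only [hN, Finset.mem_filter] at hi
            simp only [hP, Finset.mem_compl, Finset.mem_filter, not_and, not_lt]
            intro _
            linarith [hi.2]
          · intro i hi hni
            have h2 : ¬ 0 < g i := by
              have := Finset.mem_compl.mp hi
              simpa [hP] using this
            have h3 : ¬ g i < 0 := by simpa [hN] using hni
            have : g i = 0 := le_antisymm (not_lt.mp h2) (not_lt.mp h3)
            simp [this]
        rw [hw, h1.symm, Finset.sum_add_sum_compl]
        exact hsum
      have hwN : ∑ i ∈ N, g i • v i = -w := eq_neg_of_add_eq_zero_right hsplit
      have hkey : ∑ j ∈ N, g j * ⟪w, v j⟫ = -⟪w, w⟫ := by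
        have h9 : ⟪w, ∑ i ∈ N, g i • v i⟫ = -⟪w, w⟫ := by
          rw [hwN, inner_neg_right]
        rw [inner_sum] at h9
        simp_rw [real_inner_smul_right] at h9
        exact h9
      have hwv : ∀ j, ⟪w, v j⟫ = ∑ i ∈ P, g i * ⟪v i, v j⟫ := by
        intro j
        rw [hw, sum_inner]
        simp_rw [real_inner_smul_left]
      have hinner : ∀ j ∈ N, ∑ i ∈ P, g i * ⟪v i, v j⟫ < 0 := by
        intro j hj
        apply Finset.sum_neg
        · intro i hi
          have hgi : 0 < g i := (Finset.mem_filter.mp hi).2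
          have hgj : g j < 0 := (Finset.mem_filter.mp hj).2
          have hij : i.castSucc ≠ j.castSucc := by
            intro hcs
            have hij' : i = j := Fin.castSucc_injective _ hcs
            subst hij'
            linarith
          exact mul_neg_of_pos_of_neg hgi (hneg _ _ hij)
        · exact ⟨a, ha⟩
      have hpos : 0 < ∑ j ∈ N, g j * ⟪w, v j⟫ := by
        apply Finset.sum_pos
        · intro j hj
          have hgj : g j < 0 := (Finset.mem_filter.mp hj).2
          rw [hwv j]
          exact mul_pos_of_neg_of_neg hgj (hinner j hj)
        · exact ⟨b, hb⟩
      have hnn : 0 ≤ ⟪w, w⟫ := real_inner_self_nonneg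
      linarith [hkey ▸ hpos]

theorem stmt17 {r : ℕ} (D : Matrix (Fin (r + 2)) (Fin (r + 2)) ℝ)
    (p : Fin (r + 2) → EuclideanSpace ℝ (Fin r))
    (hD : ∀ i j, D i j = dist (p i) (p j) ^ 2)
    (hunit : ∀ i, ‖p i‖ = 1)
    (hr : Module.finrank ℝ (vectorSpan ℝ (Set.range p)) = r) :
    ∃ i j : Fin (r + 2), i ≠ j ∧ D i j ≤ 2 ∧
      dist (p i) (p j) ≤ Real.sqrt 2 := by
  obtain ⟨i, j, hij, hin⟩ := key_inner p
  have hd : dist (p i) (p j) ^ 2 = 2 - 2 * ⟪p i, p j⟫ := by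
    rw [dist_eq_norm, norm_sub_sq_real, hunit i, hunit j]
    ring
  have hd2 : dist (p i) (p j) ^ 2 ≤ 2 := by rw [hd]; linarith
  refine ⟨i, j, hij, by rw [hD]; exact hd2, ?_⟩
  have := Real.sqrt_le_sqrt hd2
  rwa [Real.sqrt_sq dist_nonneg] at this
end

section
/- Let D be a 2r × 2r unit spherical EDM of embedding dimension r with every off-diagonal entry ≥ 2. Then there exists a permutation matrix Q such that QDQᵀ is the r × r block matrix with diagonal blocks 4(E₂ - I₂) and all off-diagonal blocks 2E₂; i.e., the generating points are the vertices of the regular r-crosspolytope. -/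
open Matrix Finset
open scoped RealInnerProductSpace

private lemma keylem : ∀ (d : ℕ) (E : Type) [i1 : NormedAddCommGroup E]
    [i2 : InnerProductSpace ℝ E] [i3 : FiniteDimensional ℝ E],
    Module.finrank ℝ E = d → ∀ (ι : Type) [i4 : Fintype ι] [i5 : DecidableEq ι] (v : ι → E),
    (∀ i, v i ≠ 0) → (∀ i j, i ≠ j → ⟪v i, v j⟫ ≤ 0) →
    Fintype.card ι ≤ 2 * d ∧
      (2 * d ≤ Fintype.card ι → ∀ i j, i ≠ j →
        ⟪v i, v j⟫ = 0 ∨ ∃ c : ℝ, c < 0 ∧ v j = c • v i) := by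
  intro d
  induction d with
  | zero =>
    intro E _ _ _ hE ι _ _ v hv0 hvle
    have : Subsingleton E := by
      rw [← Module.finrank_zero_iff (R := ℝ)] ; exact hE
    have : IsEmpty ι := ⟨fun i => hv0 i (Subsingleton.elim _ _)⟩
    constructor
    · simp [Fintype.card_eq_zero]
    · intro _ i; exact isEmptyElim i
  | succ d IH =>
    intro E _ _ _ hE ι _ _ v hv0 hvle
    rcases isEmpty_or_nonempty ι with hι | hι
    · constructor
      · simp [Fintype.card_eq_zero]
      · intro h i; exact isEmptyElim i
    classical
    set i₀ : ι := Classical.arbitrary ι with hi₀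
    set u : E := v i₀ with hu
    have hu0 : u ≠ 0 := hv0 i₀
    have hun : (0:ℝ) < ‖u‖ ^ 2 := pow_pos (norm_pos_iff.mpr hu0) 2
    set K : Submodule ℝ E := (ℝ ∙ u)ᗮ with hK
    haveI : Fact (Module.finrank ℝ E = d + 1) := ⟨hE⟩
    have hKd : Module.finrank ℝ K = d := Submodule.finrank_orthogonal_span_singleton hu0
    set a : ι → ℝ := fun j => ⟪u, v j⟫ / ‖u‖ ^ 2 with ha
    set y : ι → E := fun j => v j - a j • u with hy
    have hyK : ∀ j, y j ∈ K := by
      intro j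
      rw [hK, Submodule.mem_orthogonal_singleton_iff_inner_right]
      simp only [hy, inner_sub_right, real_inner_smul_right, ha,
        real_inner_self_eq_norm_sq]
      field_simp
      ring
    have hdec : ∀ j, v j = a j • u + y j := by intro j; simp [hy]
    have huy : ∀ j, ⟪u, y j⟫ = 0 := fun j =>
      Submodule.mem_orthogonal_singleton_iff_inner_right.mp (hyK j)
    have huy' : ∀ j, ⟪y j, u⟫ = 0 := fun j => by
      rw [real_inner_comm]; exact huy j
    have hinner : ∀ j k, ⟪v j, v k⟫ = a j * a k * ‖u‖ ^ 2 + ⟪y j, y k⟫ := by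
      intro j k
      rw [hdec j, hdec k]
      simp only [inner_add_left, inner_add_right, real_inner_smul_left,
        real_inner_smul_right, real_inner_self_eq_norm_sq, huy, huy']
      ring
    have hale : ∀ j, j ≠ i₀ → a j ≤ 0 := by
      intro j hj
      exact div_nonpos_of_nonpos_of_nonneg (hvle i₀ j (Ne.symm hj)) (by positivity)
    set S : Finset ι := (univ.erase i₀).filter (fun j => y j = 0) with hS
    set T : Finset ι := (univ.erase i₀).filter (fun j => ¬ (y j = 0)) with hT
    have hSmem : ∀ j ∈ S, j ≠ i₀ ∧ y j = 0 := by
      intro j hj; simp [hS] at hj; tauto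
    have hTmem : ∀ j ∈ T, j ≠ i₀ ∧ y j ≠ 0 := by
      intro j hj; simp [hT] at hj; tauto
    have hST : S.card + T.card = (univ.erase i₀).card :=
      Finset.card_filter_add_card_filter_not _
    have hcard : Fintype.card ι = 1 + S.card + T.card := by
      have h1 : (univ.erase i₀).card = Fintype.card ι - 1 := by
        rw [Finset.card_erase_of_mem (mem_univ _), Finset.card_univ]
      have h2 : 1 ≤ Fintype.card ι := Fintype.card_pos
      omega
    -- a j < 0 for j ∈ S, and v j = a j • u
    have hSprop : ∀ j ∈ S, a j < 0 ∧ v j = a j • u := by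
      intro j hj
      obtain ⟨hj0, hjy⟩ := hSmem j hj
      have hvj : v j = a j • u := by rw [hdec j, hjy, add_zero]
      have : a j ≠ 0 := by
        intro h; apply hv0 j; rw [hvj, h, zero_smul]
      exact ⟨lt_of_le_of_ne (hale j hj0) this, hvj⟩
    have hS1 : S.card ≤ 1 := by
      rw [Finset.card_le_one]
      intro j hj k hk
      by_contra hne
      obtain ⟨hja, hjv⟩ := hSprop j hj
      obtain ⟨hka, hkv⟩ := hSprop k hk
      have := hvle j k hne
      rw [hjv, hkv, real_inner_smul_left, real_inner_smul_right,
        real_inner_self_eq_norm_sq] at this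
      nlinarith [mul_pos (mul_pos_of_neg_of_neg hja hka) hun]
    -- apply IH to T inside K
    set w : T → K := fun j => ⟨y j.1, hyK j.1⟩ with hw
    have hw0 : ∀ j : T, w j ≠ 0 := by
      intro j h
      exact (hTmem j.1 j.2).2 (by simpa [hw, Submodule.mk_eq_zero] using h)
    have hyle : ∀ j k : ι, j ≠ i₀ → k ≠ i₀ → j ≠ k → ⟪y j, y k⟫ ≤ 0 := by
      intro j k hj hk hjk
      have h1 := hvle j k hjk
      rw [hinner j k] at h1
      nlinarith [mul_nonneg (neg_nonneg.mpr (hale j hj)) (neg_nonneg.mpr (hale k hk))]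
    have hwle : ∀ j k : T, j ≠ k → ⟪w j, w k⟫ ≤ 0 := by
      intro j k hjk
      have : (⟪w j, w k⟫ : ℝ) = ⟪y j.1, y k.1⟫ := rfl
      rw [this]
      exact hyle _ _ (hTmem j.1 j.2).1 (hTmem k.1 k.2).1
        (fun h => hjk (Subtype.ext h))
    have hIH := IH K hKd T w hw0 hwle
    have hTcard : T.card ≤ 2 * d := by
      have := hIH.1
      rwa [Fintype.card_coe] at this
    refine ⟨by omega, ?_⟩
    -- equality case
    intro hge
    have hS1' : S.card = 1 := by omega
    have hT2d : T.card = 2 * d := by omega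
    obtain ⟨s, hsS⟩ := Finset.card_eq_one.mp hS1'
    have hsmem : s ∈ S := by rw [hsS]; exact mem_singleton_self s
    obtain ⟨hsa, hsv⟩ := hSprop s hsmem
    have hsne : s ≠ i₀ := (hSmem s hsmem).1
    -- every j in T has a j = 0
    have haT : ∀ j ∈ T, a j = 0 := by
      intro j hj
      obtain ⟨hj0, hjy⟩ := hTmem j hj
      have hjs : s ≠ j := by
        intro h; rw [h] at hsmem; exact hjy (hSmem j hsmem).2
      have h1 := hvle s j hjs
      have huvj : ⟪u, v j⟫ = a j * ‖u‖ ^ 2 := by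
        rw [hdec j, inner_add_right, real_inner_smul_right,
          real_inner_self_eq_norm_sq, huy, add_zero]
      rw [hsv, real_inner_smul_left, huvj] at h1
      by_contra hne
      have hlt : a j < 0 := lt_of_le_of_ne (hale j hj0) hne
      nlinarith [mul_pos (mul_pos_of_neg_of_neg hsa hlt) hun]
    have hvT : ∀ j ∈ T, v j = y j := by
      intro j hj; rw [hdec j, haT j hj, zero_smul, zero_add]
    have huvT : ∀ j ∈ T, ⟪u, v j⟫ = 0 := by
      intro j hj; rw [hvT j hj]; exact huy j
    have hstruct := hIH.2 (by rw [Fintype.card_coe]; omega)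
    have hclass : ∀ x : ι, x = i₀ ∨ x = s ∨ x ∈ T := by
      intro x
      by_cases h0 : x = i₀
      · exact Or.inl h0
      by_cases hy0 : y x = 0
      · have : x ∈ S := by simp [hS, h0, hy0]
        rw [hsS, mem_singleton] at this
        exact Or.inr (Or.inl this)
      · exact Or.inr (Or.inr (by simp [hT, h0, hy0]))
    intro i j hij
    have hsi₀ : ∀ (m : ι), m = i₀ → ∀ n, n = s → ⟪v m, v n⟫ = 0 ∨ ∃ c : ℝ, c < 0 ∧ v n = c • v m := by
      intro m hm n hn
      right
      exact ⟨a s, hsa, by rw [hm, hn, hsv]⟩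
    have hTi₀ : ∀ m ∈ T, ⟪v i₀, v m⟫ = 0 := fun m hm => huvT m hm
    have hTs : ∀ m ∈ T, ⟪v s, v m⟫ = 0 := by
      intro m hm
      rw [hsv, real_inner_smul_left, huvT m hm, mul_zero]
    rcases hclass i with hi | hi | hi <;> rcases hclass j with hj | hj | hj
    · exact absurd (hi.trans hj.symm) hij
    · exact hsi₀ i hi j hj
    · left; rw [hi]; exact hTi₀ j hj
    · -- i = s, j = i₀
      right
      refine ⟨(a s)⁻¹, inv_neg''.mpr hsa, ?_⟩
      rw [hi, hj, hsv, smul_smul, inv_mul_cancel₀ (ne_of_lt hsa), one_smul]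
    · exact absurd (hi.trans hj.symm) hij
    · left; rw [hi]; exact hTs j hj
    · left; rw [hj, real_inner_comm]; exact hTi₀ i hi
    · left; rw [hj, real_inner_comm]; exact hTs i hi
    · -- both in T
      have hne : (⟨i, hi⟩ : T) ≠ ⟨j, hj⟩ := by
        intro h; exact hij (congrArg Subtype.val h)
      rcases hstruct ⟨i, hi⟩ ⟨j, hj⟩ hne with h | ⟨c, hc, hcv⟩
      · left
        have : (⟪w ⟨i, hi⟩, w ⟨j, hj⟩⟫ : ℝ) = ⟪y i, y j⟫ := rfl
        rw [this] at h
        rw [hvT i hi, hvT j hj]; exact h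
      · right
        refine ⟨c, hc, ?_⟩
        have : y j = c • y i := congrArg Subtype.val hcv
        rw [hvT i hi, hvT j hj]; exact this

private lemma pairList {α : Type} [DecidableEq α] :
    ∀ (r : ℕ) (s : Finset α) (f : α → α), s.card = 2 * r →
    (∀ i ∈ s, f i ∈ s) → (∀ i ∈ s, f i ≠ i) → (∀ i ∈ s, f (f i) = i) →
    ∃ l : List α, l.length = r ∧ ((l.flatMap fun a => [a, f a] : List α) : Multiset α) = s.val := by
  intro r
  induction r with
  | zero =>
    intro s f hc _ _ _
    refine ⟨[], rfl, ?_⟩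
    have : s = ∅ := Finset.card_eq_zero.mp (by omega)
    simp [this]
  | succ r IH =>
    intro s f hc hf1 hf2 hf3
    have hpos : 0 < s.card := by omega
    obtain ⟨a, ha⟩ := Finset.card_pos.mp hpos
    have hbs : f a ∈ s := hf1 a ha
    have hba : f a ≠ a := hf2 a ha
    set s' := (s.erase a).erase (f a) with hs'
    have hbe : f a ∈ s.erase a := Finset.mem_erase.mpr ⟨hba, hbs⟩
    have hcard' : s'.card = 2 * r := by
      rw [hs', Finset.card_erase_of_mem hbe, Finset.card_erase_of_mem ha]; omega
    have hmem' : ∀ i ∈ s', i ≠ f a ∧ i ≠ a ∧ i ∈ s := by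
      intro i hi; rw [hs'] at hi
      obtain ⟨h1, h2⟩ := Finset.mem_erase.mp hi
      obtain ⟨h3, h4⟩ := Finset.mem_erase.mp h2
      exact ⟨h1, h3, h4⟩
    have h1' : ∀ i ∈ s', f i ∈ s' := by
      intro i hi
      obtain ⟨hib, hia, his⟩ := hmem' i hi
      rw [hs']
      rw [Finset.mem_erase, Finset.mem_erase]
      refine ⟨?_, ?_, hf1 i his⟩
      · intro h
        apply hia
        have := congrArg f h
        rw [hf3 i his, hf3 a ha] at this
        exact this
      · intro h
        apply hib
        have := congrArg f h
        rw [hf3 i his] at this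
        exact this
    have h2' : ∀ i ∈ s', f i ≠ i := fun i hi => hf2 i (hmem' i hi).2.2
    have h3' : ∀ i ∈ s', f (f i) = i := fun i hi => hf3 i (hmem' i hi).2.2
    obtain ⟨l', hl', hml'⟩ := IH s' f hcard' h1' h2' h3'
    refine ⟨a :: l', by simp [hl'], ?_⟩
    have hcons : ((a :: l').flatMap fun x => [x, f x]) = a :: f a :: (l'.flatMap fun x => [x, f x]) := by
      simp [List.flatMap_cons]
    rw [hcons]
    have : ((a :: f a :: (l'.flatMap fun x => [x, f x]) : List α) : Multiset α)
        = a ::ₘ f a ::ₘ ((l'.flatMap fun x => [x, f x] : List α) : Multiset α) := rfl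
    rw [this, hml']
    rw [hs']
    rw [Finset.erase_val, Finset.erase_val]
    rw [Multiset.cons_erase (by rw [← Finset.erase_val]; exact hbe)]
    rw [Multiset.cons_erase (by exact ha)]

private lemma pairGet {α : Type} (f : α → α) :
    ∀ (l : List α) (k b : ℕ) (hk : k < l.length) (hb : b < 2)
      (h : 2 * k + b < (l.flatMap fun a => [a, f a]).length),
      (l.flatMap fun a => [a, f a]).get ⟨2 * k + b, h⟩ =
        if b = 0 then l.get ⟨k, hk⟩ else f (l.get ⟨k, hk⟩) := by
  intro l
  induction l with
  | nil => intro k b hk; simp at hk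
  | cons a t IH =>
    intro k b hk hb h
    match k with
    | 0 =>
      interval_cases b
      · rfl
      · rfl
    | k + 1 =>
      have hk' : k < t.length := by simp at hk; omega
      have h' : 2 * k + b < ((t.flatMap fun a => [a, f a])).length := by
        simp at h ⊢; omega
      have heq : ((a :: t).flatMap fun x => [x, f x]).get ⟨2 * (k+1) + b, h⟩
          = (t.flatMap fun x => [x, f x]).get ⟨2 * k + b, h'⟩ := by
        have h2 : (⟨2 * (k+1) + b, h⟩ : Fin ((a :: t).flatMap fun x => [x, f x]).length)
            = ⟨(2 * k + b) + 1 + 1, by simp at h ⊢; omega⟩ := Fin.ext (by ring)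
        rw [h2]
        rfl
      rw [heq, IH k b hk' hb h']
      rfl

theorem stmt18 {r : ℕ} (D : Matrix (Fin (2 * r)) (Fin (2 * r)) ℝ)
    (p : Fin (2 * r) → EuclideanSpace ℝ (Fin r))
    (hD : ∀ i j, D i j = dist (p i) (p j) ^ 2)
    (hunit : ∀ i, ‖p i‖ = 1)
    (hr : Module.finrank ℝ (vectorSpan ℝ (Set.range p)) = r)
    (hoff : ∀ i j : Fin (2 * r), i ≠ j → 2 ≤ D i j) :
    ∃ σ : Equiv.Perm (Fin (2 * r)),
      ∀ i j : Fin (2 * r),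
        D (σ i) (σ j) =
          if i = j then 0 else if (i : ℕ) / 2 = (j : ℕ) / 2 then 4 else 2 := by
  classical
  have hfr : Module.finrank ℝ (EuclideanSpace ℝ (Fin r)) = r := by
    simp [finrank_euclideanSpace_fin]
  have hp0 : ∀ i, p i ≠ 0 := by
    intro i h
    have := hunit i
    rw [h, norm_zero] at this
    norm_num at this
  have hDinner : ∀ i j, D i j = 2 - 2 * ⟪p i, p j⟫ := by
    intro i j
    rw [hD, dist_eq_norm, norm_sub_sq_real, hunit, hunit]
    ring
  have hneg : ∀ i j, i ≠ j → ⟪p i, p j⟫ ≤ 0 := by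
    intro i j hij
    have h1 := hoff i j hij
    rw [hDinner] at h1
    linarith
  have hkey := keylem r (EuclideanSpace ℝ (Fin r)) hfr (Fin (2 * r)) p hp0 hneg
  have hdich : ∀ i j, i ≠ j → ⟪p i, p j⟫ = 0 ∨ p j = - p i := by
    intro i j hij
    rcases hkey.2 (by simp) i j hij with h | ⟨c, hc, hcv⟩
    · exact Or.inl h
    · right
      have hn : ‖p j‖ = ‖c • p i‖ := by rw [hcv]
      rw [norm_smul, hunit, hunit, mul_one] at hn
      have habs : |c| = 1 := by simpa using hn.symm
      have hc1 : c = -1 := by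
        rcases abs_cases c with ⟨h1, _⟩ | ⟨h1, _⟩ <;> linarith
      rw [hcv, hc1, neg_one_smul]
  have hex : ∀ a : Fin (2 * r), ∃ b, b ≠ a ∧ p b = - p a := by
    intro a
    by_contra hcon
    push_neg at hcon
    have horth : ∀ b, b ≠ a → ⟪p a, p b⟫ = 0 := by
      intro b hb
      rcases hdich a b (Ne.symm hb) with h | h
      · exact h
      · exact absurd h (hcon b hb)
    have hr1 : 1 ≤ r := by have := a.2; omega
    set K := (ℝ ∙ p a)ᗮ with hKdef
    haveI : Fact (Module.finrank ℝ (EuclideanSpace ℝ (Fin r)) = (r - 1) + 1) :=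
      ⟨by rw [hfr]; omega⟩
    have hKr : Module.finrank ℝ K = r - 1 := Submodule.finrank_orthogonal_span_singleton (hp0 a)
    set ι' := ↥(Finset.univ.erase a) with hι'
    have hmemK : ∀ b : ι', p b.1 ∈ K := by
      intro b
      exact Submodule.mem_orthogonal_singleton_iff_inner_right.mpr
        (horth b.1 (Finset.mem_erase.mp b.2).1)
    set w : ι' → K := fun b => ⟨p b.1, hmemK b⟩ with hw
    have hw0 : ∀ b : ι', w b ≠ 0 := by
      intro b h
      exact hp0 b.1 (by simpa [hw, Submodule.mk_eq_zero] using h)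
    have hwle : ∀ b c : ι', b ≠ c → ⟪w b, w c⟫ ≤ 0 := by
      intro b c hbc
      have : (⟪w b, w c⟫ : ℝ) = ⟪p b.1, p c.1⟫ := rfl
      rw [this]
      exact hneg _ _ (fun h => hbc (Subtype.ext h))
    have hb := (keylem (r - 1) K hKr ι' w hw0 hwle).1
    have hcι : Fintype.card ι' = 2 * r - 1 := by
      have h9 : Fintype.card ι' = (Finset.univ.erase a).card := Fintype.card_coe _
      rw [h9, Finset.card_erase_of_mem (mem_univ _), Finset.card_univ]
      simp
    omega
  set f : Fin (2 * r) → Fin (2 * r) := fun a => Classical.choose (hex a) with hf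
  have hfa : ∀ a, f a ≠ a ∧ p (f a) = - p a := fun a => Classical.choose_spec (hex a)
  have hff : ∀ a, f (f a) = a := by
    intro a
    by_contra hne
    have h1 : ⟪p (f (f a)), p a⟫ ≤ 0 := hneg _ _ hne
    rw [(hfa (f a)).2, (hfa a).2, neg_neg, real_inner_self_eq_norm_sq, hunit] at h1
    norm_num at h1
  obtain ⟨l, hlr, hlm⟩ := pairList r Finset.univ f
    (by rw [Finset.card_univ]; simp)
    (fun i _ => mem_univ _) (fun i _ => (hfa i).1) (fun i _ => hff i)
  set L := l.flatMap fun a => [a, f a] with hL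
  have hLlen : L.length = 2 * r := by
    have := congrArg Multiset.card hlm
    simpa using this
  have hdiv : ∀ i : Fin (2 * r), (i : ℕ) / 2 < l.length := by
    intro i
    have := i.2
    rw [hlr]
    omega
  set σf : Fin (2 * r) → Fin (2 * r) := fun i =>
    if (i : ℕ) % 2 = 0 then l.get ⟨(i : ℕ) / 2, hdiv i⟩
    else f (l.get ⟨(i : ℕ) / 2, hdiv i⟩) with hσf
  have hLget : ∀ (i : Fin (2 * r)) (h : (i : ℕ) < L.length), L.get ⟨(i : ℕ), h⟩ = σf i := by
    intro i h
    have hmod : (i : ℕ) % 2 < 2 := Nat.mod_lt _ (by norm_num)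
    have h2 : 2 * ((i : ℕ) / 2) + (i : ℕ) % 2 < L.length := by
      rw [hLlen]; have := i.2; omega
    have h3 : (⟨(i : ℕ), h⟩ : Fin L.length) = ⟨2 * ((i : ℕ) / 2) + (i : ℕ) % 2, h2⟩ := by
      apply Fin.ext
      simp
      omega
    rw [h3]
    rw [pairGet f l ((i : ℕ) / 2) ((i : ℕ) % 2) (hdiv i) hmod h2]
  have hsurj : Function.Surjective σf := by
    intro x
    have hx : x ∈ L := by
      have h1 : x ∈ Finset.univ.val := Finset.mem_val.mpr (mem_univ x)
      rw [← hlm] at h1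
      exact Multiset.mem_coe.mp h1
    obtain ⟨n, hn⟩ := List.mem_iff_get.mp hx
    have hn2 : (n : ℕ) < 2 * r := by have h8 := n.2; have h9 := hLlen; omega
    exact ⟨⟨n.1, hn2⟩, (hLget ⟨n.1, hn2⟩ n.2).symm.trans hn⟩
  set σ : Equiv.Perm (Fin (2 * r)) :=
    Equiv.ofBijective σf (Finite.surjective_iff_bijective.mp hsurj) with hσ
  have hσap : ∀ i, σ i = σf i := fun i => rfl
  have hσf0 : ∀ m : Fin (2 * r), (m : ℕ) % 2 = 0 → σf m = l.get ⟨(m : ℕ) / 2, hdiv m⟩ := by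
    intro m hm
    have h9 : σf m = if (m : ℕ) % 2 = 0 then l.get ⟨(m : ℕ) / 2, hdiv m⟩
        else f (l.get ⟨(m : ℕ) / 2, hdiv m⟩) := rfl
    rw [h9, if_pos hm]
  have hσf1 : ∀ m : Fin (2 * r), (m : ℕ) % 2 = 1 → σf m = f (l.get ⟨(m : ℕ) / 2, hdiv m⟩) := by
    intro m hm
    have h9 : σf m = if (m : ℕ) % 2 = 0 then l.get ⟨(m : ℕ) / 2, hdiv m⟩
        else f (l.get ⟨(m : ℕ) / 2, hdiv m⟩) := rfl
    rw [h9, if_neg (by omega)]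
  have hpartner : ∀ i i' : Fin (2 * r), (i : ℕ) / 2 = (i' : ℕ) / 2 → i ≠ i' →
      p (σf i') = - p (σf i) := by
    intro i i' hdd hne
    have hvne : (i : ℕ) ≠ (i' : ℕ) := fun h => hne (Fin.ext h)
    have hmm : (i : ℕ) % 2 ≠ (i' : ℕ) % 2 := by omega
    have hgeq : l.get ⟨(i' : ℕ) / 2, hdiv i'⟩ = l.get ⟨(i : ℕ) / 2, hdiv i⟩ :=
      congrArg l.get (Fin.ext hdd.symm)
    rcases Nat.mod_two_eq_zero_or_one (i : ℕ) with h0 | h1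
    · have h1' : (i' : ℕ) % 2 = 1 := by omega
      rw [hσf1 i' h1', hσf0 i h0, hgeq]
      exact (hfa _).2
    · have h0' : (i' : ℕ) % 2 = 0 := by omega
      rw [hσf0 i' h0', hσf1 i h1, hgeq]
      have h8 := (hfa (l.get ⟨(i : ℕ) / 2, hdiv i⟩)).2
      rw [h8, neg_neg]
  refine ⟨σ, ?_⟩
  intro i j
  by_cases hij : i = j
  · rw [if_pos hij, hij, hD, dist_self]
    norm_num
  · rw [if_neg hij]
    by_cases hk : (i : ℕ) / 2 = (j : ℕ) / 2
    · rw [if_pos hk]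
      have hpp := hpartner i j hk hij
      rw [hDinner, hσap, hσap, hpp, inner_neg_right, real_inner_self_eq_norm_sq, hunit]
      norm_num
    · rw [if_neg hk]
      have hσij : σ i ≠ σ j := fun h => hij (σ.injective h)
      have hnot : p (σ j) ≠ - p (σ i) := by
        intro hcontra
        have hi2 : (i : ℕ) / 2 < r := by have := i.2; omega
        set i' : Fin (2 * r) := ⟨2 * ((i : ℕ) / 2) + (1 - (i : ℕ) % 2), by omega⟩ with hi'
        have hmod : (i : ℕ) % 2 < 2 := Nat.mod_lt _ (by norm_num)
        have hne' : i ≠ i' := by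
          intro h
          have := congrArg Fin.val h
          rw [hi'] at this
          simp at this
          omega
        have hdd : (i : ℕ) / 2 = (i' : ℕ) / 2 := by
          rw [hi']
          simp
          omega
        have hpp := hpartner i i' hdd hne'
        have hij' : i' ≠ j := by
          intro h
          apply hk
          rw [← h]
          exact hdd
        have hσij' : σ i' ≠ σ j := fun h => hij' (σ.injective h)
        have hcontra' : p (σf j) = - p (σf i) := hcontra
        have hle := hneg _ _ hσij'
        rw [hσap, hσap, hpp, hcontra'] at hle
        rw [inner_neg_neg, real_inner_self_eq_norm_sq, hunit] at hle
        norm_num at hle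
      rcases hdich (σ i) (σ j) hσij with h0 | h1
      · rw [hDinner, h0]
        norm_num
      · exact absurd h1 hnot
end

section
/- Let D be an n × n unit spherical EDM of embedding dimension r with 2 ≤ n - r ≤ r, and suppose every off-diagonal entry of D is ≥ 2. Then there exists a permutation matrix Q such that QDQᵀ is block partitioned into n - r diagonal blocks D¹,...,D^{n-r}, each a unit spherical EDM of a simplex, with all off-diagonal blocks equal to 2E (the all-ones matrix of appropriate size). -/
open Matrix Finset
open scoped RealInnerProductSpace

namespace Stmt19Aux

variable {r n : ℕ}

noncomputable def T (v : Fin n → EuclideanSpace ℝ (Fin r)) :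
    (Fin n → ℝ) →ₗ[ℝ] EuclideanSpace ℝ (Fin r) :=
  Fintype.linearCombination ℝ v

lemma T_apply (v : Fin n → EuclideanSpace ℝ (Fin r)) (a : Fin n → ℝ) :
    T v a = ∑ i, a i • v i := rfl

def Cmp (v : Fin n → EuclideanSpace ℝ (Fin r)) : Fin n → Fin n → Prop :=
  Relation.EqvGen fun i j => (⟪v i, v j⟫ : ℝ) ≠ 0

lemma inner_T (v : Fin n → EuclideanSpace ℝ (Fin r)) (a : Fin n → ℝ)
    (x : EuclideanSpace ℝ (Fin r)) :
    ⟪x, T v a⟫ = ∑ j, a j * ⟪x, v j⟫ := by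
  rw [T_apply, inner_sum]
  exact Finset.sum_congr rfl fun j _ => real_inner_smul_right _ _ _

lemma T_inner_T (v : Fin n → EuclideanSpace ℝ (Fin r)) (a b : Fin n → ℝ) :
    ⟪T v a, T v b⟫ = ∑ i, ∑ j, a i * b j * ⟪v i, v j⟫ := by
  rw [T_apply v a, sum_inner]
  refine Finset.sum_congr rfl fun i _ => ?_
  rw [real_inner_smul_left, inner_T, Finset.mul_sum]
  exact Finset.sum_congr rfl fun j _ => by ring


variable {v : Fin n → EuclideanSpace ℝ (Fin r)}

lemma pos_mem_ker (hneg : ∀ i j : Fin n, i ≠ j → (⟪v i, v j⟫ : ℝ) ≤ 0)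
    {a : Fin n → ℝ} (ha : a ∈ LinearMap.ker (T v)) :
    (fun i => max (a i) 0) ∈ LinearMap.ker (T v) := by
  set pos : Fin n → ℝ := fun i => max (a i) 0 with hposdef
  set neg : Fin n → ℝ := fun i => max (-a i) 0 with hnegdef
  have hpn : pos - neg = a := by
    funext i
    exact max_zero_sub_max_neg_zero_eq_self (a i)
  have hTpn : T v pos = T v neg := by
    have h1 : T v pos - T v neg = T v a := by rw [← map_sub, hpn]
    rw [LinearMap.mem_ker.mp ha] at h1
    exact sub_eq_zero.mp h1
  have hle : (⟪T v pos, T v pos⟫ : ℝ) ≤ 0 := by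
    nth_rewrite 2 [hTpn]
    rw [T_inner_T]
    apply Finset.sum_nonpos
    intro i _
    apply Finset.sum_nonpos
    intro j _
    by_cases hij : i = j
    · subst hij
      have hz : pos i * neg i = 0 := by
        rcases le_total (a i) 0 with h | h
        · simp [hposdef, max_eq_right h]
        · simp [hnegdef, max_eq_right (neg_nonpos.mpr h)]
      rw [hz, zero_mul]
    · exact mul_nonpos_of_nonneg_of_nonpos
        (mul_nonneg (le_max_right _ _) (le_max_right _ _)) (hneg i j hij)
  exact LinearMap.mem_ker.mpr (real_inner_self_nonpos.mp hle)

lemma orth_of_not_cmp {i j : Fin n} (h : ¬ Cmp v i j) : (⟪v i, v j⟫ : ℝ) = 0 := by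
  by_contra h'
  exact h (Relation.EqvGen.rel _ _ h')

lemma restrict_mem_ker {a b : Fin n → ℝ} (i₀ : Fin n) (ha : a ∈ LinearMap.ker (T v))
    (hb1 : ∀ j, Cmp v i₀ j → b j = a j) (hb2 : ∀ j, ¬ Cmp v i₀ j → b j = 0) :
    b ∈ LinearMap.ker (T v) := by
  classical
  set c : Fin n → ℝ := a - b with hcdef
  have hc1 : ∀ j, Cmp v i₀ j → c j = 0 := fun j hj => by
    simp [hcdef, hb1 j hj]
  have hTb : T v b = T v a - T v c := by
    rw [hcdef, map_sub, sub_sub_cancel]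
  have hbc : (⟪T v b, T v c⟫ : ℝ) = 0 := by
    rw [T_inner_T]
    apply Finset.sum_eq_zero
    intro i _
    apply Finset.sum_eq_zero
    intro j _
    by_cases hbi : b i = 0
    · rw [hbi, zero_mul, zero_mul]
    · have hcmpi : Cmp v i₀ i := by
        by_contra h
        exact hbi (hb2 i h)
      by_cases hcj : c j = 0
      · rw [hcj, mul_zero, zero_mul]
      · have hncmpj : ¬ Cmp v i₀ j := fun h => hcj (hc1 j h)
        have : ¬ Cmp v i j := fun h =>
          hncmpj (Relation.EqvGen.trans _ _ _ hcmpi h)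
        rw [orth_of_not_cmp this, mul_zero]
  have hz : (⟪T v b, T v b⟫ : ℝ) = 0 := by
    nth_rewrite 2 [hTb]
    rw [LinearMap.mem_ker.mp ha, zero_sub, inner_neg_right, hbc, neg_zero]
  exact LinearMap.mem_ker.mpr (inner_self_eq_zero.mp hz)

lemma supp_nonpos (hneg : ∀ i j : Fin n, i ≠ j → (⟪v i, v j⟫ : ℝ) ≤ 0)
    {a : Fin n → ℝ} (i₀ : Fin n) (ha : a ∈ LinearMap.ker (T v))
    (hsupp : ∀ j, a j ≠ 0 → Cmp v i₀ j) (hsum : ∑ j, a j = 0) :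
    ∀ j, a j ≤ 0 := by
  by_contra hcon
  push_neg at hcon
  obtain ⟨j, hj⟩ := hcon
  have hpos := pos_mem_ker hneg ha
  have horth : ∀ x, a x ≤ 0 → ∀ y, 0 < a y → (⟪v x, v y⟫ : ℝ) = 0 := by
    intro x hx
    have h0 : (⟪v x, T v (fun i => max (a i) 0)⟫ : ℝ) = 0 := by
      rw [LinearMap.mem_ker.mp hpos, inner_zero_right]
    rw [inner_T] at h0
    have hterm : ∀ y ∈ Finset.univ, max (a y) 0 * (⟪v x, v y⟫ : ℝ) ≤ 0 := by
      intro y _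
      by_cases hy : 0 < a y
      · have hxy : x ≠ y := fun h => by rw [h] at hx; linarith
        exact mul_nonpos_of_nonneg_of_nonpos (le_max_right _ _) (hneg x y hxy)
      · rw [max_eq_right (not_lt.mp hy), zero_mul]
    have := (Finset.sum_eq_zero_iff_of_nonpos hterm).mp h0
    intro y hy
    have h1 := this y (Finset.mem_univ y)
    have h2 : max (a y) 0 ≠ 0 := by
      rw [max_eq_left hy.le]; exact hy.ne'
    exact (mul_eq_zero.mp h1).resolve_left h2
  have hsat : ∀ x y, Cmp v x y → (0 < a x ↔ 0 < a y) := by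
    intro x y h
    induction h with
    | rel x y h =>
      constructor
      · intro hx
        by_contra hy
        exact h (real_inner_comm (v y) (v x) ▸ horth y (not_lt.mp hy) x hx)
      · intro hy
        by_contra hx
        exact h (horth x (not_lt.mp hx) y hy)
    | refl x => exact Iff.rfl
    | symm x y _ ih => exact ih.symm
    | trans x y z _ _ ih1 ih2 => exact ih1.trans ih2
  obtain ⟨j', hj'⟩ : ∃ j', a j' < 0 := by
    by_contra h'
    push_neg at h'
    have := Finset.single_le_sum (f := a) (fun i _ => h' i) (Finset.mem_univ j)
    rw [hsum] at this
    linarith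
  have hcj := hsupp j hj.ne'
  have hcj' := hsupp j' hj'.ne
  have : Cmp v j j' := Relation.EqvGen.trans _ _ _ (Relation.EqvGen.symm _ _ hcj) hcj'
  have := (hsat j j' this).mp hj
  linarith

lemma comp_eq_zero (hneg : ∀ i j : Fin n, i ≠ j → (⟪v i, v j⟫ : ℝ) ≤ 0)
    {a : Fin n → ℝ} (i₀ : Fin n) (ha : a ∈ LinearMap.ker (T v))
    (hsupp : ∀ j, a j ≠ 0 → Cmp v i₀ j) (hsum : ∑ j, a j = 0) :
    a = 0 := by
  have h1 := supp_nonpos hneg i₀ ha hsupp hsum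
  have h2 := supp_nonpos hneg i₀ (Submodule.neg_mem _ ha)
    (fun j hj => hsupp j (by simpa using hj)) (by simp [hsum])
  funext j
  have := h1 j
  have := h2 j
  simp only [Pi.neg_apply, neg_nonpos] at h2
  have := h2 j
  simp only [Pi.zero_apply]
  linarith

lemma zero_mem_affineSpan {b : Fin n → ℝ} (hb : b ∈ LinearMap.ker (T v))
    (hb0 : b ≠ 0) (hbnn : ∀ i, 0 ≤ b i) :
    (0 : EuclideanSpace ℝ (Fin r)) ∈ affineSpan ℝ (Set.range v) := by
  obtain ⟨i, hi⟩ := Function.ne_iff.mp hb0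
  have hbi : 0 < b i := lt_of_le_of_ne (hbnn i) (Ne.symm (by simpa using hi))
  set s : ℝ := ∑ j, b j with hsdef
  have hs : 0 < s := lt_of_lt_of_le hbi
    (Finset.single_le_sum (f := b) (fun i _ => hbnn i) (Finset.mem_univ i))
  set w : Fin n → ℝ := fun j => b j / s with hwdef
  have hw : ∑ j, w j = 1 := by
    rw [hwdef]
    simp only
    rw [← Finset.sum_div, ← hsdef, div_self hs.ne']
  have hmem := affineCombination_mem_affineSpan (k := ℝ) (s := Finset.univ) hw v
  rw [Finset.affineCombination_eq_linear_combination _ _ _ hw] at hmem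
  have hz : ∑ j, w j • v j = 0 := by
    have : ∑ j, w j • v j = s⁻¹ • T v b := by
      rw [T_apply, Finset.smul_sum]
      exact Finset.sum_congr rfl fun j _ => by
        rw [smul_smul]; simp [hwdef, div_eq_inv_mul]
    rw [this, LinearMap.mem_ker.mp hb, smul_zero]
  rwa [hz] at hmem

lemma span_eq_vectorSpan (h0 : (0 : EuclideanSpace ℝ (Fin r)) ∈ affineSpan ℝ (Set.range v)) :
    Submodule.span ℝ (Set.range v) = vectorSpan ℝ (Set.range v) := by
  apply le_antisymm
  · rw [Submodule.span_le]
    rintro x ⟨i, rfl⟩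
    have hx : v i ∈ affineSpan ℝ (Set.range v) :=
      subset_affineSpan ℝ _ (Set.mem_range_self i)
    have := AffineSubspace.vsub_mem_direction hx h0
    rw [direction_affineSpan] at this
    simpa [vsub_eq_sub] using this
  · rw [vectorSpan_def, Submodule.span_le]
    rintro x ⟨x1, hx1, x2, hx2, rfl⟩
    exact sub_mem (Submodule.subset_span hx1) (Submodule.subset_span hx2)

end Stmt19Aux

open Stmt19Aux
open scoped RealInnerProductSpace

theorem stmt19 {n r : ℕ} (h1 : 2 ≤ n - r) (h2 : n - r ≤ r)
    (D : Matrix (Fin n) (Fin n) ℝ)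
    (p : Fin n → EuclideanSpace ℝ (Fin r))
    (hD : ∀ i j, D i j = dist (p i) (p j) ^ 2)
    (hunit : ∀ i, ‖p i‖ = 1)
    (hr : Module.finrank ℝ (vectorSpan ℝ (Set.range p)) = r)
    (hoff : ∀ i j : Fin n, i ≠ j → 2 ≤ D i j) :
    ∃ f : Fin n → Fin (n - r),
      Function.Surjective f ∧
      (∀ i j : Fin n, f i ≠ f j → D i j = 2) ∧
      ∀ l : Fin (n - r),
        AffineIndependent ℝ (fun i : {i : Fin n // f i = l} => p (i : Fin n)) := by
  classical
  have hinner : ∀ i j, D i j = 2 - 2 * (⟪p i, p j⟫ : ℝ) := by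
    intro i j
    rw [hD, dist_eq_norm, norm_sub_sq_real, hunit i, hunit j]; ring
  have hneg : ∀ i j : Fin n, i ≠ j → (⟪p i, p j⟫ : ℝ) ≤ 0 := by
    intro i j hij
    have := hoff i j hij
    rw [hinner] at this; linarith
  set K := LinearMap.ker (T p) with hKdef
  have hn : r + 2 ≤ n := by omega
  have hrank : Module.finrank ℝ (LinearMap.range (T p)) + Module.finrank ℝ K = n := by
    rw [hKdef, LinearMap.finrank_range_add_finrank_ker (T p)]
    exact Module.finrank_fin_fun ℝ
  have hrange : LinearMap.range (T p) = Submodule.span ℝ (Set.range p) :=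
    Fintype.range_linearCombination ℝ p
  let i₀ : Fin n := ⟨0, by omega⟩
  have hp0 : p i₀ ≠ 0 := by
    intro h
    have := hunit i₀; rw [h, norm_zero] at this; norm_num at this
  have hsuple : Submodule.span ℝ (Set.range p) ≤
      vectorSpan ℝ (Set.range p) ⊔ Submodule.span ℝ {p i₀} := by
    rw [Submodule.span_le]
    rintro x ⟨i, rfl⟩
    have hv1 : p i - p i₀ ∈ vectorSpan ℝ (Set.range p) :=
      vsub_mem_vectorSpan ℝ (Set.mem_range_self (f := p) i) (Set.mem_range_self i₀)
    have hv2 : p i₀ ∈ Submodule.span ℝ ({p i₀} : Set (EuclideanSpace ℝ (Fin r))) :=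
      Submodule.mem_span_singleton_self _
    have heq : p i = (p i - p i₀) + p i₀ := by abel
    rw [SetLike.mem_coe, heq]
    exact Submodule.add_mem_sup hv1 hv2
  have hdle : Module.finrank ℝ (Submodule.span ℝ (Set.range p)) ≤ r + 1 := by
    calc Module.finrank ℝ (Submodule.span ℝ (Set.range p))
        ≤ Module.finrank ℝ (vectorSpan ℝ (Set.range p) ⊔ Submodule.span ℝ {p i₀} :
            Submodule ℝ (EuclideanSpace ℝ (Fin r))) := Submodule.finrank_mono hsuple
      _ ≤ Module.finrank ℝ (vectorSpan ℝ (Set.range p)) +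
            Module.finrank ℝ (Submodule.span ℝ ({p i₀} : Set (EuclideanSpace ℝ (Fin r)))) :=
          Submodule.finrank_add_le_finrank_add_finrank _ _
      _ = r + 1 := by rw [hr, finrank_span_singleton hp0]
  have hKfin : 1 ≤ Module.finrank ℝ K := by
    rw [hrange] at hrank; omega
  have hKne : K ≠ ⊥ := by
    intro h
    rw [h, finrank_bot] at hKfin; omega
  obtain ⟨a, haK, ha0⟩ := (Submodule.ne_bot_iff K).mp hKne
  have hbex : ∃ b : Fin n → ℝ, b ∈ K ∧ b ≠ 0 ∧ ∀ i, 0 ≤ b i := by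
    have hsub : (fun i => max (a i) 0) - (fun i => max (-a i) 0) = a :=
      funext fun i => max_zero_sub_max_neg_zero_eq_self (a i)
    by_cases hp1 : (fun i => max (a i) 0) = 0
    · refine ⟨fun i => max (-a i) 0, ?_, ?_, fun i => le_max_right _ _⟩
      · exact pos_mem_ker hneg (Submodule.neg_mem _ haK)
      · intro h
        apply ha0
        rw [← hsub, hp1, h, sub_zero]
    · exact ⟨_, pos_mem_ker hneg haK, hp1, fun i => le_max_right _ _⟩
  obtain ⟨b, hbK, hb0, hbnn⟩ := hbex
  have hspan := span_eq_vectorSpan (zero_mem_affineSpan hbK hb0 hbnn)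
  have hKr : Module.finrank ℝ K = n - r := by
    rw [hrange, hspan, hr] at hrank; omega
  -- the component setoid
  let st : Setoid (Fin n) := ⟨Cmp p, Relation.EqvGen.is_equivalence _⟩
  let Q := Quotient st
  haveI : Fintype Q := Fintype.ofFinite Q
  let mk : Fin n → Q := Quotient.mk st
  have mk_cmp : ∀ {i j : Fin n}, mk i = mk j → Cmp p i j :=
    fun {i j} h => @Quotient.exact _ st _ _ h
  have cmp_mk : ∀ {i j : Fin n}, Cmp p i j → mk i = mk j :=
    fun {i j} h => @Quotient.sound _ st _ _ h
  let deg : Q → Prop := fun q => ∃ c : Fin n → ℝ, c ∈ K ∧ c ≠ 0 ∧ ∀ j, c j ≠ 0 → mk j = q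
  let DQ := {q : Q // deg q}
  let res : (Fin n → ℝ) → Q → (Fin n → ℝ) := fun c q j => if mk j = q then c j else 0
  have res_mem : ∀ (c : Fin n → ℝ) (q : Q), c ∈ K → res c q ∈ K := by
    intro c q hcK
    obtain ⟨i, rfl⟩ := Quotient.exists_rep q
    rw [hKdef]
    refine restrict_mem_ker (v := p) i (hKdef ▸ hcK) ?_ ?_
    · intro j hj
      exact if_pos (cmp_mk (Relation.EqvGen.symm _ _ hj))
    · intro j hj
      exact if_neg fun h => hj (Relation.EqvGen.symm _ _ (mk_cmp h))
  have res_sum : ∀ c : Fin n → ℝ, ∑ q : Q, res c q = c := by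
    intro c; funext j
    rw [Finset.sum_apply]
    simp only [res]
    rw [Finset.sum_ite_eq Finset.univ (mk j) (fun _ => c j)]
    simp
  have deg_of_res : ∀ (c : Fin n → ℝ) (q : Q), c ∈ K → res c q ≠ 0 → deg q := by
    intro c q hc hne
    refine ⟨res c q, res_mem c q hc, hne, fun j hj => ?_⟩
    by_contra h
    exact hj (if_neg h)
  let w : DQ → (Fin n → ℝ) := fun q => Classical.choose q.2
  have hw : ∀ q : DQ, w q ∈ K ∧ w q ≠ 0 ∧ ∀ j, w q j ≠ 0 → mk j = q.1 :=
    fun q => Classical.choose_spec q.2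
  have hwsupp : ∀ (q : DQ) (i : Fin n), mk i = q.1 → ∀ j, w q j ≠ 0 → Cmp p i j := by
    intro q i hi j hj
    exact Relation.EqvGen.symm _ _ (mk_cmp (((hw q).2.2 j hj).trans hi.symm))
  have hwsum : ∀ q : DQ, ∑ j, w q j ≠ 0 := by
    intro q hsum
    obtain ⟨i, hi⟩ := Function.ne_iff.mp (hw q).2.1
    have hi' : w q i ≠ 0 := by simpa using hi
    have hz := comp_eq_zero hneg i (hKdef ▸ (hw q).1)
      (fun j hj => hwsupp q i ((hw q).2.2 i hi') j hj) hsum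
    exact (hw q).2.1 hz
  have hspanw : Submodule.span ℝ (Set.range w) = K := by
    apply le_antisymm
    · rw [Submodule.span_le]; rintro x ⟨q, rfl⟩; exact (hw q).1
    · intro c hc
      have hc' : c = ∑ q : Q, res c q := (res_sum c).symm
      rw [hc']
      apply Submodule.sum_mem
      intro q _
      by_cases h0 : res c q = 0
      · rw [h0]; exact Submodule.zero_mem _
      · have hdq : deg q := deg_of_res c q hc h0
        set q' : DQ := ⟨q, hdq⟩ with hq'
        set cw := ∑ j, w q' j with hcw
        set cc := ∑ j, res c q j with hcc
        have hcw0 : cw ≠ 0 := hwsum q'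
        obtain ⟨i, hiq⟩ := Quotient.exists_rep q
        have hu : res c q - (cc / cw) • w q' = 0 := by
          apply comp_eq_zero hneg i
          · exact hKdef ▸ (Submodule.sub_mem _ (res_mem c q hc)
              (Submodule.smul_mem _ _ (hw q').1))
          · intro j hj
            have hor : res c q j ≠ 0 ∨ w q' j ≠ 0 := by
              by_contra hb; push_neg at hb
              apply hj; simp [hb.1, hb.2]
            rcases hor with h | h
            · have hmj : mk j = q := by
                by_contra hmj; exact h (if_neg hmj)
              exact Relation.EqvGen.symm _ _ (mk_cmp (hmj.trans hiq.symm))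
            · exact hwsupp q' i hiq j h
          · have hsplit : ∑ j, (res c q - (cc / cw) • w q') j
                = (∑ j, res c q j) - (cc / cw) * ∑ j, w q' j := by
              simp [Finset.sum_sub_distrib, Finset.mul_sum]
            rw [hsplit, ← hcc, ← hcw, div_mul_cancel₀ cc hcw0, sub_self]
        have hres : res c q = (cc / cw) • w q' := by
          have := sub_eq_zero.mp hu
          exact this
        rw [hres]
        exact Submodule.smul_mem _ _ (Submodule.subset_span (Set.mem_range_self q'))
  haveI : Fintype DQ := Subtype.fintype _
  have hli : LinearIndependent ℝ w := by
    rw [Fintype.linearIndependent_iff]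
    intro g hg q
    obtain ⟨j, hj⟩ := Function.ne_iff.mp (hw q).2.1
    have hj' : w q j ≠ 0 := by simpa using hj
    have h1 := congrFun hg j
    rw [Finset.sum_apply] at h1
    simp only [Pi.smul_apply, smul_eq_mul, Pi.zero_apply] at h1
    have h2 : ∀ q' ∈ Finset.univ, q' ≠ q → g q' * w q' j = 0 := by
      intro q' _ hq'
      by_cases hz : w q' j = 0
      · rw [hz, mul_zero]
      · exact absurd (Subtype.ext (((hw q').2.2 j hz).symm.trans ((hw q).2.2 j hj'))) hq'
    rw [Finset.sum_eq_single q h2 (fun h => absurd (Finset.mem_univ q) h)] at h1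
    exact (mul_eq_zero.mp h1).resolve_right hj'
  have hcard : Fintype.card DQ = n - r := by
    have := finrank_span_eq_card hli
    rw [hspanw, hKr] at this
    omega
  have hk0 : 0 < n - r := by omega
  let e : DQ ≃ Fin (n - r) := Fintype.equivFinOfCardEq hcard
  let q₀ : DQ := e.symm ⟨0, hk0⟩
  let f : Fin n → Fin (n - r) := fun i => if h : deg (mk i) then e ⟨mk i, h⟩ else e q₀
  refine ⟨f, ?_, ?_, ?_⟩
  · -- surjective
    intro l
    obtain ⟨i, hi⟩ := Quotient.exists_rep (e.symm l).1
    refine ⟨i, ?_⟩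
    have hdi : deg (mk i) := by
      show deg (Quotient.mk st i)
      rw [hi]; exact (e.symm l).2
    show (if h : deg (mk i) then e ⟨mk i, h⟩ else e q₀) = l
    rw [dif_pos hdi]
    have : (⟨mk i, hdi⟩ : DQ) = e.symm l := Subtype.ext hi
    rw [this, Equiv.apply_symm_apply]
  · -- cross classes
    intro i j hij
    have hz : (⟪p i, p j⟫ : ℝ) = 0 := by
      by_contra h'
      apply hij
      have hmij : mk i = mk j := cmp_mk (Relation.EqvGen.rel _ _ h')
      show (if h : deg (mk i) then e ⟨mk i, h⟩ else e q₀)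
        = (if h : deg (mk j) then e ⟨mk j, h⟩ else e q₀)
      rw [hmij]
    rw [hinner i j, hz]; ring
  · -- affine independence
    intro l
    rw [affineIndependent_iff]
    intro s ww hw0 hwp
    set c : Fin n → ℝ := fun i => ∑ j ∈ s, if (j : Fin n) = i then ww j else 0 with hcdef
    have hcK : c ∈ K := by
      rw [hKdef, LinearMap.mem_ker, T_apply]
      calc ∑ i, c i • p i
          = ∑ i, ∑ j ∈ s, (if (j : Fin n) = i then ww j else 0) • p i := by
            simp [hcdef, Finset.sum_smul]
        _ = ∑ j ∈ s, ∑ i, (if (j : Fin n) = i then ww j else 0) • p i := Finset.sum_comm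
        _ = ∑ j ∈ s, ww j • p j := by
            refine Finset.sum_congr rfl fun j _ => ?_
            simp [ite_smul, Finset.sum_ite_eq]
        _ = 0 := hwp
    have hcsum : ∑ i, c i = 0 := by
      rw [hcdef]
      rw [Finset.sum_comm]
      simp only [Finset.sum_ite_eq, Finset.mem_univ, if_true]
      exact hw0
    have hcsupp : ∀ i, c i ≠ 0 → f i = l := by
      intro i hi
      by_contra h
      apply hi
      rw [hcdef]
      apply Finset.sum_eq_zero
      intro j _
      rw [if_neg]
      intro hji
      exact h (hji ▸ j.2)
    have hcz : c = 0 := by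
      by_contra h
      obtain ⟨i₁, hi₁⟩ := Function.ne_iff.mp h
      have hi₁' : c i₁ ≠ 0 := by simpa using hi₁
      have key : ∀ i, c i ≠ 0 → ∃ hd : deg (mk i), e ⟨mk i, hd⟩ = l := by
        intro i hi
        have hres : res c (mk i) ≠ 0 := by
          intro hz
          apply hi
          have := congrFun hz i
          simpa [res] using this
        have hd : deg (mk i) := deg_of_res c (mk i) hcK hres
        refine ⟨hd, ?_⟩
        have hfi := hcsupp i hi
        have : (if h : deg (mk i) then e ⟨mk i, h⟩ else e q₀) = l := hfi
        rwa [dif_pos hd] at this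
      have hclass : ∀ i, c i ≠ 0 → mk i = mk i₁ := by
        intro i hi
        obtain ⟨hd, he⟩ := key i hi
        obtain ⟨hd1, he1⟩ := key i₁ hi₁'
        have := e.injective (he.trans he1.symm)
        exact congrArg Subtype.val this
      have := comp_eq_zero hneg i₁ (hKdef ▸ hcK)
        (fun j hj => Relation.EqvGen.symm _ _ (mk_cmp (hclass j hj))) hcsum
      exact h this
    intro j hj
    have hwa : ww j = c j := by
      show ww j = ∑ j' ∈ s, if (j' : Fin n) = (j : Fin n) then ww j' else 0
      rw [show (∑ j' ∈ s, if (j' : Fin n) = (j : Fin n) then ww j' else 0)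
          = ∑ j' ∈ s, if j' = j then ww j' else 0 from
        Finset.sum_congr rfl fun j' _ => if_congr Subtype.coe_injective.eq_iff rfl rfl]
      rw [Finset.sum_ite_eq' s j (fun j' => ww j')]
      simp [hj]
    rw [hwa, hcz]
    simp
end
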